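/- arXiv:1702.05678 — 2 statements merged into one kernel-verified Lean document; each statement's English description precedes it below -/
import Mathlib

section
/- Let n be a prime and let C : 𝔽_n^n → 𝔽_n^m be an injective 𝔽_n-linear map; let δ(C) ∈ (0,1] be its relative distance (the minimum relative Hamming distance between distinct codewords) and let 𝒞 := C(𝔽_n^n). Suppose: (LTC) there exist q_T ∈ ℕ, a₁ > 0, c₁ ≥ 1 and a randomized non-adaptive algorithm making at most q_T queries to an oracle w : [m] → 𝔽_n that accepts every w ∈ 𝒞 with probability 1 and rejects every w ∉ 𝒞 with probability at least a₁·dist(w,𝒞)^{c₁}; (relaxed-LDC) there exist δ_r ∈ (0, δ(C)/2), q_D ∈ ℕ and a randomized non-adaptive algorithm D that, on index i ∈ [n], makes at most q_D queries to w and outputs an element of 𝔽_n or ⊥, such that for every x and i, D^{C(x)}(i) = x_i with probability 1, and for every w with dist(w, C(x)) ≤ δ_r for some codeword C(x), Pr[D^w(i) ∈ {x_i, ⊥}] ≥ 2/3. Then there is a constant A (depending only on q_T and q_D) such that for every f : 𝔽_n^n → {0,1} admitting a randomized (k,q)-round-adaptive decision tree algorithm, and every ε ∈ (0,1], the property C_f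 := {C(x) : f(x) = 1} (assumed nonempty) has a (k, q')-round-adaptive ε-tester with q' ≤ A·q·(log₂(q)+2) + A·⌈1/(a₁·min(δ_r,ε)^{c₁})⌉. Moreover, if the decision tree algorithm outputs f(x) with probability 1 for every x, then the tester is one-sided. -/
open scoped ENNReal BigOperators

namespace Adaptivity

/-- A deterministic `k`-round-adaptive query algorithm over domain `D` with answer
alphabet `R` and output type `O`: in each of the `k+1` rounds it chooses a query set
based on the partial view of the oracle obtained so far (which records exactly the
previously queried points and the answers received), and finally produces an output
from the full view obtained. -/
structure DetAlg (D R O : Type) [DecidableEq D] (k : ℕ) where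
  query : Fin (k + 1) → (D → Option R) → Finset D
  out : (D → Option R) → O

variable {D R O : Type} [DecidableEq D] {k : ℕ}

/-- The partial view of an oracle `f` on a set `Q` of already-queried points. -/
def view (f : D → R) (Q : Finset D) : D → Option R :=
  fun x => if x ∈ Q then some (f x) else none

/-- The set of points queried during the first `ℓ` rounds, when run on oracle `f`. -/
def DetAlg.seen (T : DetAlg D R O k) (f : D → R) : ℕ → Finset D
  | 0 => ∅
  | ℓ + 1 =>
      T.seen f ℓ ∪
        (if h : ℓ < k + 1 then T.query ⟨ℓ, h⟩ (view f (T.seen f ℓ)) else ∅)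

/-- The query set produced in round `ℓ` on oracle `f`. -/
def DetAlg.queries (T : DetAlg D R O k) (f : D → R) (ℓ : Fin (k + 1)) : Finset D :=
  T.query ℓ (view f (T.seen f ℓ.1))

/-- The total number of queries made on oracle `f`. -/
def DetAlg.totalQueries (T : DetAlg D R O k) (f : D → R) : ℕ :=
  ∑ ℓ : Fin (k + 1), (T.queries f ℓ).card

/-- The output of the algorithm on oracle `f`. -/
def DetAlg.run (T : DetAlg D R O k) (f : D → R) : O :=
  T.out (view f (T.seen f (k + 1)))

/-- A randomized `k`-round-adaptive algorithm is a probability distribution (`PMF`) over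
deterministic ones; `probOut A f p` is the probability that its output on oracle `f`
satisfies the predicate `p`. -/
noncomputable def probOut (A : PMF (DetAlg D R O k)) (f : D → R) (p : O → Prop) : ℝ≥0∞ :=
  A.toOuterMeasure {T | p (T.run f)}

/-- The randomized algorithm `A` makes at most `q` queries in total, on every oracle. -/
def queryBound (A : PMF (DetAlg D R O k)) (q : ℝ) : Prop :=
  ∀ T ∈ A.support, ∀ f : D → R, (T.totalQueries f : ℝ) ≤ q

/-- Relative Hamming distance between two functions on a finite domain. -/
noncomputable def hamDist [Fintype D] (f g : D → R) : ℝ :=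
  ({x : D | f x ≠ g x}.ncard : ℝ) / (Fintype.card D : ℝ)

/-- Relative Hamming distance from a function to a (nonempty) property. -/
noncomputable def distToProp [Fintype D] (f : D → R) (P : Set (D → R)) : ℝ :=
  sInf (hamDist f '' P)

/-- `A` is a `(k,q)`-round-adaptive `ε`-tester for the property `P`. -/
def IsTester [Fintype D] (q ε : ℝ) (P : Set (D → R))
    (A : PMF (DetAlg D R Bool k)) : Prop :=
  queryBound A q ∧
    (∀ f ∈ P, (2 : ℝ≥0∞) / 3 ≤ probOut A f (· = true)) ∧
    (∀ f : D → R, ε < distToProp f P → (2 : ℝ≥0∞) / 3 ≤ probOut A f (· = false))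

/-- `A` is a one-sided tester for `P`: it accepts every member of `P` with probability 1. -/
def OneSidedTester [Fintype D] (P : Set (D → R)) (A : PMF (DetAlg D R Bool k)) : Prop :=
  ∀ f ∈ P, probOut A f (· = true) = 1

end Adaptivity
namespace Adaptivity

variable {D R O : Type} [DecidableEq D] {k : ℕ}

lemma view_empty (f : D → R) : view f (∅ : Finset D) = fun _ => none := by
  funext x; simp [view]

lemma view_congr_subset (f : D → R) {Q U : Finset D} (h : Q ⊆ U) :
    (fun y => if y ∈ Q then view f U y else none) = view f Q := by
  funext y
  by_cases hy : y ∈ Q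
  · simp [view, hy, h hy]
  · simp [view, hy]

lemma DetAlg.seen_succ (T : DetAlg D R O k) (f : D → R) (ℓ : ℕ) (h : ℓ < k + 1) :
    T.seen f (ℓ + 1) = T.seen f ℓ ∪ T.queries f ⟨ℓ, h⟩ := by
  simp [DetAlg.seen, DetAlg.queries, h]

lemma DetAlg.seen_mono (T : DetAlg D R O k) (f : D → R) {ℓ ℓ' : ℕ} (h : ℓ ≤ ℓ') :
    T.seen f ℓ ⊆ T.seen f ℓ' := by
  induction ℓ' with
  | zero => simpa [Nat.le_zero.mp h] using Finset.Subset.refl _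
  | succ i ih =>
      rcases Nat.lt_or_ge ℓ (i+1) with h' | h'
      · exact (ih (Nat.lt_succ_iff.mp h')).trans (by simp [DetAlg.seen])
      · have : ℓ = i + 1 := le_antisymm h h'
        subst this; exact Finset.Subset.refl _

lemma DetAlg.queries_subset_seen_succ (T : DetAlg D R O k) (f : D → R) (ℓ : Fin (k+1)) :
    T.queries f ℓ ⊆ T.seen f (ℓ.1 + 1) := by
  have := T.seen_succ f ℓ.1 ℓ.2
  intro x hx
  rw [this]
  exact Finset.mem_union_right _ (by simpa using hx)

lemma DetAlg.seen_congr (T : DetAlg D R O k) {g g' : D → R} (ℓ : ℕ)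
    (h : ∀ i ∈ T.seen g ℓ, g' i = g i) : T.seen g' ℓ = T.seen g ℓ := by
  induction ℓ with
  | zero => rfl
  | succ i ih =>
      have hsub : T.seen g i ⊆ T.seen g (i+1) := T.seen_mono g (Nat.le_succ i)
      have hi : T.seen g' i = T.seen g i := ih (fun x hx => h x (hsub hx))
      have hview : view g' (T.seen g i) = view g (T.seen g i) := by
        funext x
        by_cases hx : x ∈ T.seen g i
        · simp [view, hx, h x (hsub hx)]
        · simp [view, hx]
      show T.seen g' i ∪ _ = T.seen g i ∪ _
      rw [hi, hview]

lemma DetAlg.queries_congr (T : DetAlg D R O k) {g g' : D → R} (ℓ : Fin (k+1))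
    (h : ∀ i ∈ T.seen g ℓ.1, g' i = g i) : T.queries g' ℓ = T.queries g ℓ := by
  have hs := T.seen_congr ℓ.1 h
  have hview : view g' (T.seen g' ℓ.1) = view g (T.seen g ℓ.1) := by
    rw [hs]; funext x
    by_cases hx : x ∈ T.seen g ℓ.1
    · simp [view, hx, h x hx]
    · simp [view, hx]
  rw [DetAlg.queries, DetAlg.queries, hview]

lemma DetAlg.run_congr (T : DetAlg D R O k) {g g' : D → R}
    (h : ∀ i ∈ T.seen g (k+1), g' i = g i) : T.run g' = T.run g := by
  have hs := T.seen_congr (k+1) h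
  have hview : view g' (T.seen g' (k+1)) = view g (T.seen g (k+1)) := by
    rw [hs]; funext x
    by_cases hx : x ∈ T.seen g (k+1)
    · simp [view, hx, h x hx]
    · simp [view, hx]
  rw [DetAlg.run, DetAlg.run, hview]

lemma DetAlg.card_seen_le (T : DetAlg D R O k) (f : D → R) :
    ∀ ℓ : ℕ, ℓ ≤ k + 1 →
      (T.seen f ℓ).card ≤ ∑ ℓ' : Fin (k+1), if ℓ'.1 < ℓ then (T.queries f ℓ').card else 0
  | 0, _ => by simp [DetAlg.seen]
  | (i+1), h => by
      have hik : i < k + 1 := h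
      rw [T.seen_succ f i hik]
      calc (T.seen f i ∪ T.queries f ⟨i, hik⟩).card
          ≤ (T.seen f i).card + (T.queries f ⟨i, hik⟩).card := Finset.card_union_le _ _
        _ ≤ (∑ ℓ' : Fin (k+1), if ℓ'.1 < i then (T.queries f ℓ').card else 0)
              + (T.queries f ⟨i, hik⟩).card :=
            Nat.add_le_add_right (T.card_seen_le f i (Nat.le_of_succ_le h)) _
        _ ≤ ∑ ℓ' : Fin (k+1), if ℓ'.1 < i + 1 then (T.queries f ℓ').card else 0 := by
            have hsplit : ∀ ℓ' : Fin (k+1),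
                (if ℓ'.1 < i + 1 then (T.queries f ℓ').card else 0)
                = (if ℓ'.1 < i then (T.queries f ℓ').card else 0)
                  + (if ℓ' = ⟨i, hik⟩ then (T.queries f ℓ').card else 0) := by
              intro ℓ'
              by_cases h1 : ℓ'.1 < i
              · have : ℓ' ≠ ⟨i, hik⟩ := by
                  intro hh; rw [hh] at h1; exact absurd h1 (by simp)
                simp [h1, this, Nat.lt_succ_of_lt h1]
              · by_cases h2 : ℓ' = ⟨i, hik⟩
                · subst h2; simp [h1]
                · have : ¬ (ℓ'.1 < i + 1) := by
                    intro hh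
                    have : ℓ'.1 = i := by omega
                    exact h2 (Fin.ext this)
                  simp [h1, h2, this]
            rw [Finset.sum_congr rfl (fun ℓ' _ => hsplit ℓ'), Finset.sum_add_distrib,
              Finset.sum_ite_eq' Finset.univ (⟨i, hik⟩ : Fin (k+1))]
            simp [Nat.add_comm]

lemma DetAlg.card_seen_le_totalQueries (T : DetAlg D R O k) (f : D → R) :
    (T.seen f (k+1)).card ≤ T.totalQueries f := by
  refine (T.card_seen_le f (k+1) le_rfl).trans ?_
  rw [DetAlg.totalQueries]
  exact Finset.sum_le_sum fun ℓ' _ => by simp [ℓ'.2]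

/-- The (fixed) query set of a 0-round algorithm. -/
def DetAlg.Q0 (S : DetAlg D R O 0) : Finset D := S.query 0 (fun _ => none)

lemma DetAlg.seen_one_zero_round (S : DetAlg D R O 0) (f : D → R) :
    S.seen f 1 = S.Q0 := by
  have : view f (S.seen f 0) = fun _ => none := by
    funext x; simp [DetAlg.seen, view]
  simp [DetAlg.seen, this, DetAlg.Q0]
  rfl

lemma DetAlg.run_zero_round (S : DetAlg D R O 0) (f : D → R) :
    S.run f = S.out (view f S.Q0) := by
  rw [DetAlg.run, show (0:ℕ) + 1 = 1 from rfl, S.seen_one_zero_round f]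

lemma DetAlg.totalQueries_zero_round (S : DetAlg D R O 0) (f : D → R) :
    S.totalQueries f = S.Q0.card := by
  rw [DetAlg.totalQueries]
  rw [Fin.sum_univ_one]
  have : view f (S.seen f (0:Fin 1).1) = fun _ => none := by
    funext x; simp [DetAlg.seen, view]
  rw [DetAlg.queries, this]; rfl

end Adaptivity
namespace PMF

variable {α β γ : Type}

lemma toOuterMeasure_le_one (p : PMF α) (S : Set α) : p.toOuterMeasure S ≤ 1 := by
  rw [toOuterMeasure_apply]
  calc ∑' x, S.indicator p x ≤ ∑' x, p x :=
        ENNReal.tsum_le_tsum (fun x => Set.indicator_le_self S p x)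
    _ = 1 := p.tsum_coe

lemma toOuterMeasure_ne_top (p : PMF α) (S : Set α) : p.toOuterMeasure S ≠ ⊤ :=
  ne_top_of_le_ne_top ENNReal.one_ne_top (p.toOuterMeasure_le_one S)

lemma toOuterMeasure_add_compl (p : PMF α) (S : Set α) :
    p.toOuterMeasure S + p.toOuterMeasure Sᶜ = 1 := by
  rw [toOuterMeasure_apply, toOuterMeasure_apply, ← ENNReal.tsum_add]
  rw [← p.tsum_coe]
  exact tsum_congr fun x => by
    by_cases hx : x ∈ S <;> simp [Set.indicator_of_mem, Set.indicator_of_notMem, hx]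

lemma toOuterMeasure_compl (p : PMF α) (S : Set α) :
    p.toOuterMeasure Sᶜ = 1 - p.toOuterMeasure S := by
  have h := p.toOuterMeasure_add_compl S
  rw [add_comm] at h
  exact ENNReal.eq_sub_of_add_eq (p.toOuterMeasure_ne_top S) h

lemma toOuterMeasure_univ (p : PMF α) : p.toOuterMeasure Set.univ = 1 := by
  have h := p.toOuterMeasure_add_compl Set.univ
  simpa using h

/-- Product of two `PMF`s. -/
noncomputable def prodP (p : PMF α) (q : PMF β) : PMF (α × β) :=
  p.bind fun a => q.map (Prod.mk a)

lemma prodP_om (p : PMF α) (q : PMF β) (E : Set (α × β)) :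
    (p.prodP q).toOuterMeasure E = ∑' a, p a * q.toOuterMeasure {b | (a, b) ∈ E} := by
  rw [prodP, toOuterMeasure_bind_apply]
  refine tsum_congr fun a => ?_
  rw [toOuterMeasure_map_apply]
  rfl

lemma prodP_om_rect (p : PMF α) (q : PMF β) (S : Set α) (T : Set β) :
    (p.prodP q).toOuterMeasure {ω | ω.1 ∈ S ∧ ω.2 ∈ T}
      = p.toOuterMeasure S * q.toOuterMeasure T := by
  rw [prodP_om, toOuterMeasure_apply p S, ← ENNReal.tsum_mul_right]
  refine tsum_congr fun a => ?_
  by_cases ha : a ∈ S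
  · have : {b | (a, b) ∈ {ω : α × β | ω.1 ∈ S ∧ ω.2 ∈ T}} = T := by
      ext b; simp [ha]
    rw [this, Set.indicator_of_mem ha]
  · have : {b | (a, b) ∈ {ω : α × β | ω.1 ∈ S ∧ ω.2 ∈ T}} = (∅ : Set β) := by
      ext b; simp [ha]
    rw [this, Set.indicator_of_notMem ha]
    simp

lemma prodP_apply (p : PMF α) (q : PMF β) (a : α) (b : β) :
    p.prodP q (a, b) = p a * q b := by
  have h := prodP_om_rect p q {a} {b}
  have hset : {ω : α × β | ω.1 ∈ ({a} : Set α) ∧ ω.2 ∈ ({b} : Set β)} = {(a, b)} := by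
    ext ⟨x, y⟩; simp [Prod.ext_iff]
  rw [hset] at h
  rw [← toOuterMeasure_apply_singleton, h, toOuterMeasure_apply_singleton,
    toOuterMeasure_apply_singleton]

lemma mem_support_prodP {p : PMF α} {q : PMF β} {ω : α × β} (h : ω ∈ (p.prodP q).support) :
    ω.1 ∈ p.support ∧ ω.2 ∈ q.support := by
  obtain ⟨a, b⟩ := ω
  rw [mem_support_iff, prodP_apply] at h
  rw [mem_support_iff, mem_support_iff]
  exact ⟨fun h0 => h (by simp [h0]), fun h0 => h (by simp [h0])⟩

/-- Finite product of `PMF`s indexed by `Fin N`. -/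
noncomputable def piFin : {N : ℕ} → (∀ _ : Fin N, PMF β) → PMF (Fin N → β)
  | 0, _ => PMF.pure (fun i => i.elim0)
  | N+1, A => (A 0).bind fun b => (piFin (fun i => A i.succ)).map (Fin.cons b)

open Classical in
lemma piFin_om_cyl : ∀ {N : ℕ} (A : ∀ _ : Fin N, PMF β) (S : Fin N → Set β),
    (piFin A).toOuterMeasure {g | ∀ i, g i ∈ S i}
      = ∏ i, (A i).toOuterMeasure (S i)
  | 0, A, S => by
      rw [piFin, toOuterMeasure_pure_apply]
      simp
  | N+1, A, S => by
      rw [piFin, toOuterMeasure_bind_apply]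
      have key : ∀ b : β,
          ((piFin (fun i => A i.succ)).map (Fin.cons b)).toOuterMeasure
              {g | ∀ i, g i ∈ S i}
            = if b ∈ S 0 then
                (piFin (fun i => A i.succ)).toOuterMeasure {g | ∀ i, g i ∈ S i.succ}
              else 0 := by
        intro b
        rw [toOuterMeasure_map_apply]
        by_cases hb : b ∈ S 0
        · rw [if_pos hb]
          congr 1
          ext g
          simp only [Set.mem_preimage, Set.mem_setOf_eq]
          constructor
          · intro h i; have := h i.succ; simpa [Fin.cons_succ] using this
          · intro h i
            refine Fin.cases ?_ ?_ i
            · simpa [Fin.cons_zero] using hb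
            · intro j; simpa [Fin.cons_succ] using h j
        · rw [if_neg hb]
          have : Fin.cons b ⁻¹' {g : Fin (N+1) → β | ∀ i, g i ∈ S i} = ∅ := by
            ext g
            simp only [Set.mem_preimage, Set.mem_setOf_eq, Set.mem_empty_iff_false,
              iff_false, not_forall]
            exact ⟨0, by simpa [Fin.cons_zero] using hb⟩
          rw [this]
          simp
      calc ∑' b, A 0 b * ((piFin (fun i => A i.succ)).map (Fin.cons b)).toOuterMeasure
              {g | ∀ i, g i ∈ S i}
          = ∑' b, (S 0).indicator (A 0) b *
              (piFin (fun i => A i.succ)).toOuterMeasure {g | ∀ i, g i ∈ S i.succ} := by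
            refine tsum_congr fun b => ?_
            rw [key b]
            by_cases hb : b ∈ S 0
            · rw [if_pos hb, Set.indicator_of_mem hb]
            · rw [if_neg hb, Set.indicator_of_notMem hb, zero_mul, mul_zero]
        _ = (A 0).toOuterMeasure (S 0) *
              (piFin (fun i => A i.succ)).toOuterMeasure {g | ∀ i, g i ∈ S i.succ} := by
            rw [ENNReal.tsum_mul_right, ← toOuterMeasure_apply]
        _ = ∏ i, (A i).toOuterMeasure (S i) := by
            rw [piFin_om_cyl (fun i => A i.succ) (fun i => S i.succ), Fin.prod_univ_succ]

lemma piFin_apply {N : ℕ} (A : ∀ _ : Fin N, PMF β) (g : Fin N → β) :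
    piFin A g = ∏ i, A i (g i) := by
  have h := piFin_om_cyl A (fun i => {g i})
  have hset : {h : Fin N → β | ∀ i, h i ∈ ({g i} : Set β)} = {g} := by
    ext h'; simp [funext_iff]
  rw [hset, toOuterMeasure_apply_singleton] at h
  rw [h]
  exact Finset.prod_congr rfl fun i _ => toOuterMeasure_apply_singleton _ _

lemma mem_support_piFin {N : ℕ} {A : ∀ _ : Fin N, PMF β} {g : Fin N → β}
    (h : g ∈ (piFin A).support) : ∀ i, g i ∈ (A i).support := by
  rw [mem_support_iff, piFin_apply] at h
  intro i
  rw [mem_support_iff]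
  intro h0
  exact h (Finset.prod_eq_zero (Finset.mem_univ i) h0)

end PMF
namespace PTDT
open Adaptivity

variable {n m k r M : ℕ}

abbrev TreeT (n m : ℕ) := DetAlg (Fin m) (ZMod n) Bool 0
abbrev TreeD (n m : ℕ) := DetAlg (Fin m) (ZMod n) (Option (ZMod n)) 0
abbrev TreeX (n k : ℕ) := DetAlg (Fin n) (ZMod n) Bool k
abbrev Copy (n m k r : ℕ) := TreeX n k × (Fin n → Fin (r+1) → TreeD n m)
abbrev Omega (n m k r M : ℕ) :=
  (Fin M → TreeT n m) × (Copy n m k r × Copy n m k r × Copy n m k r)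

def outOn {O : Type} (S : DetAlg (Fin m) (ZMod n) O 0) (v : Fin m → Option (ZMod n)) : O :=
  S.out (fun y => if y ∈ S.Q0 then v y else none)

lemma outOn_view {O : Type} (S : DetAlg (Fin m) (ZMod n) O 0) (w : Fin m → ZMod n)
    {U : Finset (Fin m)} (h : S.Q0 ⊆ U) : outOn S (view w U) = S.run w := by
  rw [S.run_zero_round, outOn, view_congr_subset w h]

open Classical in
noncomputable def decVal (dec : Fin n → Fin (r+1) → TreeD n m)
    (v : Fin m → Option (ZMod n)) (i : Fin n) : Option (ZMod n) :=
  if (∀ j, outOn (dec i j) v = outOn (dec i 0) v) ∧ (outOn (dec i 0) v).isSome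
  then outOn (dec i 0) v else none

open Classical in
noncomputable def decValW (dec : Fin n → Fin (r+1) → TreeD n m)
    (w : Fin m → ZMod n) (i : Fin n) : Option (ZMod n) :=
  if (∀ j, (dec i j).run w = (dec i 0).run w) ∧ ((dec i 0).run w).isSome
  then (dec i 0).run w else none

noncomputable def xhat (dec : Fin n → Fin (r+1) → TreeD n m)
    (v : Fin m → Option (ZMod n)) : Fin n → ZMod n := fun i => (decVal dec v i).getD 0

noncomputable def xhatW (dec : Fin n → Fin (r+1) → TreeD n m)
    (w : Fin m → ZMod n) : Fin n → ZMod n := fun i => (decValW dec w i).getD 0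

lemma decVal_view (dec : Fin n → Fin (r+1) → TreeD n m) (w : Fin m → ZMod n)
    {U : Finset (Fin m)} (i : Fin n) (h : ∀ j, (dec i j).Q0 ⊆ U) :
    decVal dec (view w U) i = decValW dec w i := by
  have he : ∀ j, outOn (dec i j) (view w U) = (dec i j).run w :=
    fun j => outOn_view _ w (h j)
  simp only [decVal, decValW, he]

def decSets (dec : Fin n → Fin (r+1) → TreeD n m) (i : Fin n) : Finset (Fin m) :=
  Finset.univ.biUnion fun j => (dec i j).Q0

lemma Q0_subset_decSets (dec : Fin n → Fin (r+1) → TreeD n m) (i : Fin n) (j : Fin (r+1)) :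
    (dec i j).Q0 ⊆ decSets dec i :=
  Finset.subset_biUnion_of_mem (fun j => (dec i j).Q0) (Finset.mem_univ j)

noncomputable def copyQV (cp : Copy n m k r) (v : Fin m → Option (ZMod n))
    (ℓ : Fin (k+1)) : Finset (Fin m) :=
  (cp.1.queries (xhat cp.2 v) ℓ).biUnion (decSets cp.2)

noncomputable def copyQW (cp : Copy n m k r) (w : Fin m → ZMod n)
    (ℓ : Fin (k+1)) : Finset (Fin m) :=
  (cp.1.queries (xhatW cp.2 w) ℓ).biUnion (decSets cp.2)

noncomputable def copySeenW (cp : Copy n m k r) (w : Fin m → ZMod n) (ℓ : ℕ) :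
    Finset (Fin m) :=
  (cp.1.seen (xhatW cp.2 w) ℓ).biUnion (decSets cp.2)

open Classical in
noncomputable def simOutV (cp : Copy n m k r) (v : Fin m → Option (ZMod n)) : Bool :=
  if (∀ ℓ, ∀ i ∈ cp.1.queries (xhat cp.2 v) ℓ, (decVal cp.2 v i).isSome)
  then cp.1.run (xhat cp.2 v) else false

open Classical in
noncomputable def simOutW (cp : Copy n m k r) (w : Fin m → ZMod n) : Bool :=
  if (∀ ℓ, ∀ i ∈ cp.1.queries (xhatW cp.2 w) ℓ, (decValW cp.2 w i).isSome)
  then cp.1.run (xhatW cp.2 w) else false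

def maj3 (a b c : Bool) : Bool := (a && b) || (a && c) || (b && c)

open Classical in
noncomputable def comb (ω : Omega n m k r M) : DetAlg (Fin m) (ZMod n) Bool k where
  query ℓ v :=
    (if ℓ.1 = 0 then Finset.univ.biUnion (fun j => (ω.1 j).Q0) else ∅)
      ∪ (copyQV ω.2.1 v ℓ ∪ copyQV ω.2.2.1 v ℓ ∪ copyQV ω.2.2.2 v ℓ)
  out v :=
    if (∀ j, outOn (ω.1 j) v = true)
        ∧ maj3 (simOutV ω.2.1 v) (simOutV ω.2.2.1 v) (simOutV ω.2.2.2 v) = true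
    then true else false

noncomputable def plannedSeen (ω : Omega n m k r M) (w : Fin m → ZMod n) (ℓ : ℕ) :
    Finset (Fin m) :=
  (if ℓ = 0 then ∅ else Finset.univ.biUnion fun j => (ω.1 j).Q0)
    ∪ (copySeenW ω.2.1 w ℓ ∪ copySeenW ω.2.2.1 w ℓ ∪ copySeenW ω.2.2.2 w ℓ)

/- agreement of decoded values on already-planned coordinates -/
lemma copy_decVal_agree (cp : Copy n m k r) (w : Fin m → ZMod n) {U : Finset (Fin m)}
    {ℓ : ℕ} (hU : copySeenW cp w ℓ ⊆ U) :
    ∀ i ∈ cp.1.seen (xhatW cp.2 w) ℓ, decVal cp.2 (view w U) i = decValW cp.2 w i := by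
  intro i hi
  refine decVal_view cp.2 w i fun j => ?_
  refine ((Q0_subset_decSets cp.2 i j).trans ?_).trans hU
  exact Finset.subset_biUnion_of_mem (decSets cp.2) hi

lemma copy_xhat_agree (cp : Copy n m k r) (w : Fin m → ZMod n) {U : Finset (Fin m)}
    {ℓ : ℕ} (hU : copySeenW cp w ℓ ⊆ U) :
    ∀ i ∈ cp.1.seen (xhatW cp.2 w) ℓ, xhat cp.2 (view w U) i = xhatW cp.2 w i := by
  intro i hi
  rw [xhat, xhatW, copy_decVal_agree cp w hU i hi]

lemma copy_queries_eq (cp : Copy n m k r) (w : Fin m → ZMod n) {U : Finset (Fin m)}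
    (ℓ : Fin (k+1)) (hU : copySeenW cp w ℓ.1 ⊆ U) :
    cp.1.queries (xhat cp.2 (view w U)) ℓ = cp.1.queries (xhatW cp.2 w) ℓ :=
  cp.1.queries_congr ℓ (copy_xhat_agree cp w hU)

lemma copyQV_eq (cp : Copy n m k r) (w : Fin m → ZMod n) {U : Finset (Fin m)}
    (ℓ : Fin (k+1)) (hU : copySeenW cp w ℓ.1 ⊆ U) :
    copyQV cp (view w U) ℓ = copyQW cp w ℓ := by
  rw [copyQV, copyQW, copy_queries_eq cp w ℓ hU]

lemma copySeenW_succ (cp : Copy n m k r) (w : Fin m → ZMod n) (ℓ : ℕ) (h : ℓ < k + 1) :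
    copySeenW cp w (ℓ+1) = copySeenW cp w ℓ ∪ copyQW cp w ⟨ℓ, h⟩ := by
  rw [copySeenW, copySeenW, copyQW, cp.1.seen_succ _ ℓ h]
  ext y
  simp [Finset.mem_biUnion]
  constructor
  · rintro ⟨i, hi | hi, hy⟩
    · exact Or.inl ⟨i, hi, hy⟩
    · exact Or.inr ⟨i, hi, hy⟩
  · rintro (⟨i, hi, hy⟩ | ⟨i, hi, hy⟩)
    · exact ⟨i, Or.inl hi, hy⟩
    · exact ⟨i, Or.inr hi, hy⟩

lemma comb_seen (ω : Omega n m k r M) (w : Fin m → ZMod n) :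
    ∀ ℓ, ℓ ≤ k + 1 → (comb ω).seen w ℓ = plannedSeen ω w ℓ := by
  intro ℓ
  induction ℓ with
  | zero =>
      intro _
      simp [DetAlg.seen, plannedSeen, copySeenW]
  | succ i ih =>
      intro h
      have hik : i < k + 1 := h
      have hIH := ih (Nat.le_of_succ_le h)
      rw [(comb ω).seen_succ w i hik, hIH]
      have hq : (comb ω).queries w ⟨i, hik⟩
          = (if i = 0 then Finset.univ.biUnion (fun j => (ω.1 j).Q0) else ∅)
            ∪ (copyQW ω.2.1 w ⟨i, hik⟩ ∪ copyQW ω.2.2.1 w ⟨i, hik⟩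
                ∪ copyQW ω.2.2.2 w ⟨i, hik⟩) := by
        rw [DetAlg.queries, hIH]
        show (if i = 0 then _ else _) ∪ _ = _
        congr 1
        have h1 : copySeenW ω.2.1 w i ⊆ plannedSeen ω w i := by
          rw [plannedSeen]; intro y hy
          exact Finset.mem_union_right _ (Finset.mem_union_left _ (Finset.mem_union_left _ hy))
        have h2 : copySeenW ω.2.2.1 w i ⊆ plannedSeen ω w i := by
          rw [plannedSeen]; intro y hy
          exact Finset.mem_union_right _ (Finset.mem_union_left _ (Finset.mem_union_right _ hy))
        have h3 : copySeenW ω.2.2.2 w i ⊆ plannedSeen ω w i := by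
          rw [plannedSeen]; intro y hy
          exact Finset.mem_union_right _ (Finset.mem_union_right _ hy)
        rw [copyQV_eq ω.2.1 w ⟨i, hik⟩ h1, copyQV_eq ω.2.2.1 w ⟨i, hik⟩ h2,
          copyQV_eq ω.2.2.2 w ⟨i, hik⟩ h3]
      rw [hq, plannedSeen, plannedSeen,
        copySeenW_succ ω.2.1 w i hik, copySeenW_succ ω.2.2.1 w i hik,
        copySeenW_succ ω.2.2.2 w i hik]
      by_cases hi0 : i = 0
      · simp only [if_pos hi0, if_neg (Nat.succ_ne_zero i), Finset.empty_union,
          Finset.union_empty]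
        ac_rfl
      · simp only [if_neg hi0, if_neg (Nat.succ_ne_zero i), Finset.empty_union,
          Finset.union_empty]
        ac_rfl

lemma comb_queries (ω : Omega n m k r M) (w : Fin m → ZMod n) (ℓ : Fin (k+1)) :
    (comb ω).queries w ℓ
      = (if ℓ.1 = 0 then Finset.univ.biUnion (fun j => (ω.1 j).Q0) else ∅)
        ∪ (copyQW ω.2.1 w ℓ ∪ copyQW ω.2.2.1 w ℓ ∪ copyQW ω.2.2.2 w ℓ) := by
  rw [DetAlg.queries, comb_seen ω w ℓ.1 (Nat.le_of_lt_succ (Nat.lt_succ_of_lt ℓ.2))]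
  show (if ℓ.1 = 0 then _ else _) ∪ _ = _
  congr 1
  have h1 : copySeenW ω.2.1 w ℓ.1 ⊆ plannedSeen ω w ℓ.1 := by
    rw [plannedSeen]; intro y hy
    exact Finset.mem_union_right _ (Finset.mem_union_left _ (Finset.mem_union_left _ hy))
  have h2 : copySeenW ω.2.2.1 w ℓ.1 ⊆ plannedSeen ω w ℓ.1 := by
    rw [plannedSeen]; intro y hy
    exact Finset.mem_union_right _ (Finset.mem_union_left _ (Finset.mem_union_right _ hy))
  have h3 : copySeenW ω.2.2.2 w ℓ.1 ⊆ plannedSeen ω w ℓ.1 := by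
    rw [plannedSeen]; intro y hy
    exact Finset.mem_union_right _ (Finset.mem_union_right _ hy)
  rw [copyQV_eq ω.2.1 w ℓ h1, copyQV_eq ω.2.2.1 w ℓ h2, copyQV_eq ω.2.2.2 w ℓ h3]

lemma copy_simOut_eq (cp : Copy n m k r) (w : Fin m → ZMod n) {U : Finset (Fin m)}
    (hU : copySeenW cp w (k+1) ⊆ U) :
    simOutV cp (view w U) = simOutW cp w := by
  set g : Fin n → ZMod n := xhatW cp.2 w with hg
  set g' : Fin n → ZMod n := xhat cp.2 (view w U) with hg'
  have hagree : ∀ i ∈ cp.1.seen g (k+1), g' i = g i := copy_xhat_agree cp w hU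
  have hqe : ∀ ℓ : Fin (k+1), cp.1.queries g' ℓ = cp.1.queries g ℓ := by
    intro ℓ
    refine cp.1.queries_congr ℓ fun i hi => ?_
    exact hagree i (cp.1.seen_mono g (Nat.le_of_lt_succ (Nat.lt_succ_of_lt ℓ.2)) hi)
  have hrun : cp.1.run g' = cp.1.run g := cp.1.run_congr hagree
  have hdv : ∀ ℓ : Fin (k+1), ∀ i ∈ cp.1.queries g ℓ,
      decVal cp.2 (view w U) i = decValW cp.2 w i := by
    intro ℓ i hi
    refine copy_decVal_agree cp w hU i ?_
    exact cp.1.seen_mono g ℓ.2 (cp.1.queries_subset_seen_succ g ℓ hi)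
  rw [simOutV, simOutW]
  have hcond : (∀ ℓ, ∀ i ∈ cp.1.queries g' ℓ, (decVal cp.2 (view w U) i).isSome)
      ↔ (∀ ℓ, ∀ i ∈ cp.1.queries g ℓ, (decValW cp.2 w i).isSome) := by
    constructor
    · intro hc ℓ i hi
      rw [← hdv ℓ i hi]
      exact hc ℓ i (by rw [hqe ℓ]; exact hi)
    · intro hc ℓ i hi
      rw [hqe ℓ] at hi
      rw [hdv ℓ i hi]
      exact hc ℓ i hi
  exact if_congr hcond hrun rfl

lemma comb_run (ω : Omega n m k r M) (w : Fin m → ZMod n) :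
    (comb ω).run w
      = if (∀ j, (ω.1 j).run w = true)
            ∧ maj3 (simOutW ω.2.1 w) (simOutW ω.2.2.1 w) (simOutW ω.2.2.2 w) = true
        then true else false := by
  rw [DetAlg.run, comb_seen ω w (k+1) le_rfl]
  have hsub : ∀ cp ∈ [ω.2.1, ω.2.2.1, ω.2.2.2],
      copySeenW cp w (k+1) ⊆ plannedSeen ω w (k+1) := by
    intro cp hcp y hy
    rw [plannedSeen]
    simp only [List.mem_cons, List.not_mem_nil, or_false] at hcp
    rcases hcp with h | h | h
    · subst h
      exact Finset.mem_union_right _ (Finset.mem_union_left _ (Finset.mem_union_left _ hy))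
    · subst h
      exact Finset.mem_union_right _ (Finset.mem_union_left _ (Finset.mem_union_right _ hy))
    · subst h
      exact Finset.mem_union_right _ (Finset.mem_union_right _ hy)
  have htst : ∀ j, outOn (ω.1 j) (view w (plannedSeen ω w (k+1))) = (ω.1 j).run w := by
    intro j
    refine outOn_view _ w ?_
    rw [plannedSeen, if_neg (Nat.succ_ne_zero k)]
    exact (Finset.subset_biUnion_of_mem (fun j => (ω.1 j).Q0)
      (Finset.mem_univ j)).trans Finset.subset_union_left
  have hs1 := copy_simOut_eq ω.2.1 w (hsub _ (by simp))
  have hs2 := copy_simOut_eq ω.2.2.1 w (hsub _ (by simp))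
  have hs3 := copy_simOut_eq ω.2.2.2 w (hsub _ (by simp))
  show (if _ ∧ _ then true else false) = _
  simp only [htst, hs1, hs2, hs3]

end PTDT
namespace PTDT
open Adaptivity

variable {n m k r M : ℕ}

lemma decSets_card_le (dec : Fin n → Fin (r+1) → TreeD n m) {qD : ℕ}
    (h : ∀ i j, ((dec i j).Q0).card ≤ qD) (i : Fin n) :
    (decSets dec i).card ≤ (r+1) * qD := by
  refine (Finset.card_biUnion_le).trans ?_
  calc ∑ j, ((dec i j).Q0).card ≤ ∑ _j : Fin (r+1), qD :=
        Finset.sum_le_sum fun j _ => h i j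
    _ = (r+1) * qD := by simp [Finset.sum_const, Finset.card_univ]

lemma copyQW_card_le (cp : Copy n m k r) (w : Fin m → ZMod n) (ℓ : Fin (k+1)) {qD : ℕ}
    (h : ∀ i j, ((cp.2 i j).Q0).card ≤ qD) :
    (copyQW cp w ℓ).card ≤ (cp.1.queries (xhatW cp.2 w) ℓ).card * ((r+1) * qD) := by
  refine (Finset.card_biUnion_le).trans ?_
  calc ∑ i ∈ cp.1.queries (xhatW cp.2 w) ℓ, (decSets cp.2 i).card
      ≤ ∑ _i ∈ cp.1.queries (xhatW cp.2 w) ℓ, (r+1) * qD :=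
        Finset.sum_le_sum fun i _ => decSets_card_le cp.2 h i
    _ = (cp.1.queries (xhatW cp.2 w) ℓ).card * ((r+1) * qD) := by
        simp [Finset.sum_const, Nat.smul_one_eq_cast]

lemma copy_queries_total_le (cp : Copy n m k r) (w : Fin m → ZMod n) {qD q : ℕ}
    (h : ∀ i j, ((cp.2 i j).Q0).card ≤ qD)
    (hq : cp.1.totalQueries (xhatW cp.2 w) ≤ q) :
    ∑ ℓ : Fin (k+1), (copyQW cp w ℓ).card ≤ q * ((r+1) * qD) := by
  calc ∑ ℓ : Fin (k+1), (copyQW cp w ℓ).card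
      ≤ ∑ ℓ : Fin (k+1), (cp.1.queries (xhatW cp.2 w) ℓ).card * ((r+1) * qD) :=
        Finset.sum_le_sum fun ℓ _ => copyQW_card_le cp w ℓ h
    _ = (∑ ℓ : Fin (k+1), (cp.1.queries (xhatW cp.2 w) ℓ).card) * ((r+1) * qD) := by
        rw [Finset.sum_mul]
    _ ≤ q * ((r+1) * qD) := Nat.mul_le_mul_right _ hq

lemma comb_totalQueries_le (ω : Omega n m k r M) (w : Fin m → ZMod n) {qT qD q : ℕ}
    (hT : ∀ j, ((ω.1 j).Q0).card ≤ qT)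
    (hD : ∀ cp ∈ [ω.2.1, ω.2.2.1, ω.2.2.2], ∀ i j, ((cp.2 i j).Q0).card ≤ qD)
    (hq : ∀ cp ∈ [ω.2.1, ω.2.2.1, ω.2.2.2], cp.1.totalQueries (xhatW cp.2 w) ≤ q) :
    (comb ω).totalQueries w ≤ M * qT + 3 * (q * ((r+1) * qD)) := by
  have hcard : ∀ ℓ : Fin (k+1), ((comb ω).queries w ℓ).card
      ≤ (if ℓ.1 = 0 then M * qT else 0) + ((copyQW ω.2.1 w ℓ).card
          + (copyQW ω.2.2.1 w ℓ).card + (copyQW ω.2.2.2 w ℓ).card) := by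
    intro ℓ
    rw [comb_queries]
    refine (Finset.card_union_le _ _).trans (Nat.add_le_add ?_ ?_)
    · by_cases h0 : ℓ.1 = 0
      · rw [if_pos h0, if_pos h0]
        refine (Finset.card_biUnion_le).trans ?_
        calc ∑ j, ((ω.1 j).Q0).card ≤ ∑ _j : Fin M, qT := Finset.sum_le_sum fun j _ => hT j
          _ = M * qT := by simp [Finset.sum_const, Finset.card_univ]
      · rw [if_neg h0, if_neg h0]
        simp
    · exact (Finset.card_union_le _ _).trans
        (Nat.add_le_add (Finset.card_union_le _ _) le_rfl)
  calc (comb ω).totalQueries w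
      ≤ ∑ ℓ : Fin (k+1), ((if ℓ.1 = 0 then M * qT else 0) + ((copyQW ω.2.1 w ℓ).card
          + (copyQW ω.2.2.1 w ℓ).card + (copyQW ω.2.2.2 w ℓ).card)) :=
        Finset.sum_le_sum fun ℓ _ => hcard ℓ
    _ = (∑ ℓ : Fin (k+1), if ℓ.1 = 0 then M * qT else 0)
        + ((∑ ℓ : Fin (k+1), (copyQW ω.2.1 w ℓ).card)
          + (∑ ℓ : Fin (k+1), (copyQW ω.2.2.1 w ℓ).card)
          + (∑ ℓ : Fin (k+1), (copyQW ω.2.2.2 w ℓ).card)) := by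
        rw [Finset.sum_add_distrib, Finset.sum_add_distrib, Finset.sum_add_distrib]
    _ ≤ M * qT + (q * ((r+1) * qD) + q * ((r+1) * qD) + q * ((r+1) * qD)) := by
        refine Nat.add_le_add ?_ (Nat.add_le_add (Nat.add_le_add ?_ ?_) ?_)
        · have : ∀ ℓ : Fin (k+1), (if ℓ.1 = 0 then M * qT else 0)
              = if ℓ = ⟨0, Nat.succ_pos k⟩ then M * qT else 0 := by
            intro ℓ
            congr 1
            simp only [Fin.ext_iff, Fin.val_mk]
          rw [Finset.sum_congr rfl fun ℓ _ => this ℓ,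
            Finset.sum_ite_eq' Finset.univ (⟨0, Nat.succ_pos k⟩ : Fin (k+1))]
          simp
        · exact copy_queries_total_le _ w (hD _ (by simp)) (hq _ (by simp))
        · exact copy_queries_total_le _ w (hD _ (by simp)) (hq _ (by simp))
        · exact copy_queries_total_le _ w (hD _ (by simp)) (hq _ (by simp))
    _ = M * qT + 3 * (q * ((r+1) * qD)) := by ring

lemma decValW_of_correct (dec : Fin n → Fin (r+1) → TreeD n m) (w : Fin m → ZMod n)
    (x : Fin n → ZMod n) (i : Fin n) (hall : ∀ j, (dec i j).run w = some (x i)) :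
    decValW dec w i = some (x i) := by
  rw [decValW, if_pos ⟨fun j => by rw [hall j, hall 0], by rw [hall 0]; rfl⟩, hall 0]

lemma simOutW_eq_of_correct (cp : Copy n m k r) (w : Fin m → ZMod n)
    (x : Fin n → ZMod n) (hall : ∀ i j, (cp.2 i j).run w = some (x i)) :
    simOutW cp w = cp.1.run x := by
  have hdv : ∀ i, decValW cp.2 w i = some (x i) :=
    fun i => decValW_of_correct cp.2 w x i (hall i)
  have hx : xhatW cp.2 w = x := by
    funext i; rw [xhatW, hdv i]; rfl
  rw [simOutW, hx, if_pos]
  intro ℓ i _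
  rw [hdv i]; rfl

lemma decValW_all_wrong (dec : Fin n → Fin (r+1) → TreeD n m) (w : Fin m → ZMod n)
    (a : ZMod n) (i : Fin n)
    (h : ¬(decValW dec w i = some a ∨ decValW dec w i = none)) :
    ∀ j, ¬((dec i j).run w = some a ∨ (dec i j).run w = none) := by
  push_neg at h
  obtain ⟨h1, h2⟩ := h
  rw [decValW] at h1 h2
  by_cases hc : (∀ j, (dec i j).run w = (dec i 0).run w) ∧ ((dec i 0).run w).isSome
  · rw [if_pos hc] at h1
    intro j
    rw [hc.1 j]
    push_neg
    refine ⟨h1, ?_⟩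
    intro hn
    rw [hn] at hc
    exact absurd hc.2 (by simp)
  · rw [if_neg hc] at h2
    exact absurd rfl h2

lemma run_true_of_simOutW_true (cp : Copy n m k r) (w : Fin m → ZMod n)
    (x : Fin n → ZMod n)
    (hB : ∀ i ∈ cp.1.seen x (k+1),
      decValW cp.2 w i = some (x i) ∨ decValW cp.2 w i = none)
    (h : simOutW cp w = true) : cp.1.run x = true := by
  by_cases hall : ∀ i ∈ cp.1.seen x (k+1), decValW cp.2 w i = some (x i)
  · -- the decoded oracle agrees with x on everything seen
    have hagree : ∀ i ∈ cp.1.seen x (k+1), xhatW cp.2 w i = x i := by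
      intro i hi
      rw [xhatW, hall i hi]; rfl
    have hrun : cp.1.run (xhatW cp.2 w) = cp.1.run x := cp.1.run_congr hagree
    rw [simOutW] at h
    by_cases hc : (∀ ℓ, ∀ i ∈ cp.1.queries (xhatW cp.2 w) ℓ, (decValW cp.2 w i).isSome)
    · rw [if_pos hc] at h
      rw [← hrun, h]
    · rw [if_neg hc] at h
      exact absurd h (by simp)
  · -- there is a failed coordinate: we show `simOutW = false`, contradiction
    exfalso
    push_neg at hall
    obtain ⟨i0, hi0mem, hi0⟩ := hall
    have hnone : decValW cp.2 w i0 = none := (hB i0 hi0mem).resolve_left hi0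
    -- the first stage at which a failed coordinate is seen
    have hex : ∃ ℓ, ∃ i ∈ cp.1.seen x ℓ, decValW cp.2 w i = none := ⟨k+1, i0, hi0mem, hnone⟩
    classical
    obtain ⟨i1, hi1mem, hi1⟩ := Nat.find_spec hex
    have hℓ0le : Nat.find hex ≤ k + 1 := Nat.find_le ⟨i0, hi0mem, hnone⟩
    have hℓ0pos : 0 < Nat.find hex := by
      rcases Nat.eq_zero_or_pos (Nat.find hex) with h0 | h0
      · rw [h0] at hi1mem
        exact absurd hi1mem (by simp [DetAlg.seen])
      · exact h0
    obtain ⟨ℓ', hℓ'⟩ : ∃ ℓ', Nat.find hex = ℓ' + 1 := ⟨Nat.find hex - 1, by omega⟩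
    rw [hℓ'] at hi1mem
    have hℓ'lt : ℓ' < k + 1 := by omega
    have hnotprev : ∀ i ∈ cp.1.seen x ℓ', decValW cp.2 w i ≠ none := by
      intro i hi hin
      exact Nat.find_min hex (by omega) ⟨i, hi, hin⟩
    have hagree' : ∀ i ∈ cp.1.seen x ℓ', xhatW cp.2 w i = x i := by
      intro i hi
      have := hB i (cp.1.seen_mono x (by omega) hi)
      rcases this with hsome | hnone'
      · rw [xhatW, hsome]; rfl
      · exact absurd hnone' (hnotprev i hi)
    have hqe : cp.1.queries (xhatW cp.2 w) ⟨ℓ', hℓ'lt⟩ = cp.1.queries x ⟨ℓ', hℓ'lt⟩ :=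
      cp.1.queries_congr ⟨ℓ', hℓ'lt⟩ hagree'
    have hi1q : i1 ∈ cp.1.queries x ⟨ℓ', hℓ'lt⟩ := by
      rw [cp.1.seen_succ x ℓ' hℓ'lt] at hi1mem
      rcases Finset.mem_union.mp hi1mem with hmem | hmem
      · exact absurd hi1 (hnotprev i1 hmem)
      · exact hmem
    have : simOutW cp w = false := by
      rw [simOutW, if_neg]
      push_neg
      refine ⟨⟨ℓ', hℓ'lt⟩, i1, by rw [hqe]; exact hi1q, ?_⟩
      rw [hi1]
      simp
    rw [this] at h
    exact absurd h (by simp)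

end PTDT
namespace PTDT
open Adaptivity PMF

variable {α : Type} {n m k r M : ℕ}

lemma bool_set_compl (g : α → Bool) :
    {a : α | g a = false} = {a : α | g a = true}ᶜ := by
  ext a; simp

lemma om_eq_one_sub_compl (p : PMF α) (S : Set α) :
    p.toOuterMeasure S = 1 - p.toOuterMeasure Sᶜ := by
  refine ENNReal.eq_sub_of_add_eq (p.toOuterMeasure_ne_top _) ?_
  exact p.toOuterMeasure_add_compl S

lemma om_compl_le {p : PMF α} {S : Set α} {c : ℝ≥0∞}
    (h : c ≤ p.toOuterMeasure S) : p.toOuterMeasure Sᶜ ≤ 1 - c := by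
  rw [toOuterMeasure_compl]
  exact tsub_le_tsub_left h 1

lemma prodP_marg_fst {β : Type} (p : PMF α) (q : PMF β) (S : Set α) :
    (p.prodP q).toOuterMeasure {ω | ω.1 ∈ S} = p.toOuterMeasure S := by
  have : {ω : α × β | ω.1 ∈ S} = {ω | ω.1 ∈ S ∧ ω.2 ∈ Set.univ} := by
    ext ω; simp
  rw [this, prodP_om_rect, toOuterMeasure_univ, mul_one]

lemma prodP_marg_snd {β : Type} (p : PMF α) (q : PMF β) (S : Set β) :
    (p.prodP q).toOuterMeasure {ω | ω.2 ∈ S} = q.toOuterMeasure S := by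
  have : {ω : α × β | ω.2 ∈ S} = {ω | ω.1 ∈ Set.univ ∧ ω.2 ∈ S} := by
    ext ω; simp
  rw [this, prodP_om_rect, toOuterMeasure_univ, one_mul]

lemma maj3_not (a b c : Bool) : (maj3 a b c = false) ↔ (maj3 (!a) (!b) (!c) = true) := by
  cases a <;> cases b <;> cases c <;> simp [maj3]

/-- the central 3-fold majority bound -/
lemma maj3_bound {α₁ α₂ α₃ : Type} (p₁ : PMF α₁) (p₂ : PMF α₂) (p₃ : PMF α₃)
    (b₁ : α₁ → Bool) (b₂ : α₂ → Bool) (b₃ : α₃ → Bool) (B : ℝ≥0∞)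
    (h₁ : p₁.toOuterMeasure {a | b₁ a = true} ≤ B)
    (h₂ : p₂.toOuterMeasure {a | b₂ a = true} ≤ B)
    (h₃ : p₃.toOuterMeasure {a | b₃ a = true} ≤ B) :
    (p₁.prodP (p₂.prodP p₃)).toOuterMeasure
        {ω | maj3 (b₁ ω.1) (b₂ ω.2.1) (b₃ ω.2.2) = true}
      ≤ B * (1 - (1 - B) * (1 - B)) + B * B := by
  set Por := (p₂.prodP p₃).toOuterMeasure {bc | b₂ bc.1 = true ∨ b₃ bc.2 = true} with hPor
  set Pand := (p₂.prodP p₃).toOuterMeasure {bc | b₂ bc.1 = true ∧ b₃ bc.2 = true} with hPand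
  have heq : (p₁.prodP (p₂.prodP p₃)).toOuterMeasure
      {ω | maj3 (b₁ ω.1) (b₂ ω.2.1) (b₃ ω.2.2) = true}
      = ∑' a, p₁ a * (if b₁ a = true then Por else Pand) := by
    rw [prodP_om]
    refine tsum_congr fun a => ?_
    congr 1
    by_cases hb : b₁ a = true
    · rw [if_pos hb, hPor]
      congr 1
      ext bc
      simp only [Set.mem_setOf_eq, hb, maj3]
      cases b₂ bc.1 <;> cases b₃ bc.2 <;> simp
    · rw [if_neg hb, hPand]
      rw [Bool.not_eq_true] at hb
      congr 1
      ext bc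
      simp only [Set.mem_setOf_eq, hb, maj3]
      cases b₂ bc.1 <;> cases b₃ bc.2 <;> simp
  have hsplit : ∑' a, p₁ a * (if b₁ a = true then Por else Pand)
      = (∑' a, {a | b₁ a = true}.indicator p₁ a) * Por
        + (∑' a, {a | b₁ a = false}.indicator p₁ a) * Pand := by
    rw [← ENNReal.tsum_mul_right, ← ENNReal.tsum_mul_right, ← ENNReal.tsum_add]
    refine tsum_congr fun a => ?_
    by_cases hb : b₁ a = true
    · rw [if_pos hb, Set.indicator_of_mem (by exact hb),
        Set.indicator_of_notMem (by simp [hb])]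
      simp
    · rw [if_neg hb, Set.indicator_of_notMem (by exact hb),
        Set.indicator_of_mem (by simp only [Set.mem_setOf_eq, Bool.not_eq_true] at hb ⊢; exact hb)]
      simp
  have hPor_le : Por ≤ 1 - (1 - B) * (1 - B) := by
    have hcompl : {bc : α₂ × α₃ | b₂ bc.1 = true ∨ b₃ bc.2 = true}ᶜ
        = {bc : α₂ × α₃ | bc.1 ∈ {a | b₂ a = true}ᶜ ∧ bc.2 ∈ {a | b₃ a = true}ᶜ} := by
      ext bc; simp [not_or]
    have e2 : (1:ℝ≥0∞) - B ≤ p₂.toOuterMeasure {a | b₂ a = true}ᶜ := by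
      rw [toOuterMeasure_compl]
      exact tsub_le_tsub_left h₂ 1
    have e3 : (1:ℝ≥0∞) - B ≤ p₃.toOuterMeasure {a | b₃ a = true}ᶜ := by
      rw [toOuterMeasure_compl]
      exact tsub_le_tsub_left h₃ 1
    rw [hPor, om_eq_one_sub_compl, hcompl, prodP_om_rect]
    exact tsub_le_tsub_left (mul_le_mul' e2 e3) 1
  have hPand_le : Pand ≤ B * B := by
    have : {bc : α₂ × α₃ | b₂ bc.1 = true ∧ b₃ bc.2 = true}
        = {bc : α₂ × α₃ | bc.1 ∈ {a | b₂ a = true} ∧ bc.2 ∈ {a | b₃ a = true}} := rfl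
    rw [hPand, this, prodP_om_rect]
    exact mul_le_mul' h₂ h₃
  rw [heq, hsplit]
  refine add_le_add (mul_le_mul' ?_ hPor_le) ?_
  · rw [← toOuterMeasure_apply]
    exact h₁
  · calc (∑' a, {a | b₁ a = false}.indicator (⇑p₁) a) * Pand
        ≤ 1 * (B * B) := by
          refine mul_le_mul' ?_ hPand_le
          exact (le_trans (le_of_eq (toOuterMeasure_apply _ _).symm)
            (toOuterMeasure_le_one _ _))
      _ = B * B := one_mul _

end PTDT
namespace PTDT
open Adaptivity PMF MeasureTheory

variable {α : Type} {n m k r M : ℕ}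

lemma eo_third : (1/3 : ℝ≥0∞) = ENNReal.ofReal (1/3) := by
  rw [ENNReal.ofReal_div_of_pos (by norm_num), ENNReal.ofReal_one, ENNReal.ofReal_ofNat]

lemma eo_frac (a b : ℕ) [a.AtLeastTwo] [b.AtLeastTwo] :
    ((OfNat.ofNat a : ℝ≥0∞) / OfNat.ofNat b) =
      ENNReal.ofReal ((OfNat.ofNat a : ℝ) / OfNat.ofNat b) := by
  have hb : (0:ℝ) < OfNat.ofNat b := by
    rw [← Nat.cast_ofNat (n := b)]
    exact_mod_cast Nat.pos_of_ne_zero (NeZero.ne _)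
  rw [ENNReal.ofReal_div_of_pos hb, ENNReal.ofReal_ofNat, ENNReal.ofReal_ofNat]

lemma maj3_numeric {B : ℝ≥0∞} (hB : B ≤ 7/20) :
    B * (1 - (1 - B) * (1 - B)) + B * B ≤ 1/3 := by
  rw [eo_frac 7 20] at hB
  have h1320 : ENNReal.ofReal ((13:ℝ)/20) ≤ 1 - B := by
    calc ENNReal.ofReal ((13:ℝ)/20) = ENNReal.ofReal 1 - ENNReal.ofReal ((7:ℝ)/20) := by
          rw [← ENNReal.ofReal_sub _ (by norm_num)]
          norm_num
      _ = 1 - ENNReal.ofReal ((7:ℝ)/20) := by rw [ENNReal.ofReal_one]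
      _ ≤ 1 - B := tsub_le_tsub_left hB 1
  have hmul : ENNReal.ofReal ((169:ℝ)/400) ≤ (1 - B) * (1 - B) := by
    calc ENNReal.ofReal ((169:ℝ)/400)
        = ENNReal.ofReal ((13:ℝ)/20) * ENNReal.ofReal ((13:ℝ)/20) := by
          rw [← ENNReal.ofReal_mul (by norm_num)]
          norm_num
      _ ≤ (1 - B) * (1 - B) := mul_le_mul' h1320 h1320
  have hPor : 1 - (1 - B) * (1 - B) ≤ ENNReal.ofReal ((231:ℝ)/400) := by
    calc 1 - (1 - B) * (1 - B) ≤ 1 - ENNReal.ofReal ((169:ℝ)/400) :=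
          tsub_le_tsub_left hmul 1
      _ = ENNReal.ofReal 1 - ENNReal.ofReal ((169:ℝ)/400) := by rw [ENNReal.ofReal_one]
      _ = ENNReal.ofReal ((231:ℝ)/400) := by
          rw [← ENNReal.ofReal_sub _ (by norm_num)]
          norm_num
  calc B * (1 - (1 - B) * (1 - B)) + B * B
      ≤ ENNReal.ofReal ((7:ℝ)/20) * ENNReal.ofReal ((231:ℝ)/400)
        + ENNReal.ofReal ((7:ℝ)/20) * ENNReal.ofReal ((7:ℝ)/20) :=
        add_le_add (mul_le_mul' hB hPor) (mul_le_mul' hB hB)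
    _ = ENNReal.ofReal ((7:ℝ)/20 * ((231:ℝ)/400) + (7:ℝ)/20 * ((7:ℝ)/20)) := by
        rw [← ENNReal.ofReal_mul (by norm_num), ← ENNReal.ofReal_mul (by norm_num),
          ← ENNReal.ofReal_add (by positivity) (by positivity)]
    _ ≤ ENNReal.ofReal ((1:ℝ)/3) := ENNReal.ofReal_le_ofReal (by norm_num)
    _ = 1/3 := eo_third.symm

lemma one_sub_third : (2/3 : ℝ≥0∞) ≤ 1 - 1/3 := by
  rw [eo_third, eo_frac 2 3]
  refine le_of_eq ?_
  calc ENNReal.ofReal ((2:ℝ)/3) = ENNReal.ofReal 1 - ENNReal.ofReal ((1:ℝ)/3) := by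
        rw [← ENNReal.ofReal_sub _ (by norm_num)]; norm_num
    _ = 1 - ENNReal.ofReal ((1:ℝ)/3) := by rw [ENNReal.ofReal_one]

lemma one_sub_twothirds : (1:ℝ≥0∞) - 2/3 ≤ 1/3 := by
  rw [eo_third, eo_frac 2 3]
  calc (1:ℝ≥0∞) - ENNReal.ofReal ((2:ℝ)/3)
      = ENNReal.ofReal 1 - ENNReal.ofReal ((2:ℝ)/3) := by rw [ENNReal.ofReal_one]
    _ = ENNReal.ofReal (1 - (2:ℝ)/3) := by rw [← ENNReal.ofReal_sub _ (by norm_num)]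
    _ ≤ ENNReal.ofReal ((1:ℝ)/3) := ENNReal.ofReal_le_ofReal (by norm_num)

/-- single-coordinate cylinder bound for the decoder randomness -/
lemma decPi_wrong_bound (Dp : Fin n → PMF (TreeD n m)) (w : Fin m → ZMod n)
    (x : Fin n → ZMod n) (i : Fin n)
    (hc : ∀ i, (Dp i).toOuterMeasure
      {S : TreeD n m | ¬(S.run w = some (x i) ∨ S.run w = none)} ≤ 1/3) :
    (PMF.piFin (fun i => PMF.piFin (fun _ : Fin (r+1) => Dp i))).toOuterMeasure
        {dec | ∀ j, ¬((dec i j).run w = some (x i) ∨ (dec i j).run w = none)}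
      ≤ (1/3 : ℝ≥0∞)^(r+1) := by
  classical
  set Sin : Set (Fin (r+1) → TreeD n m) :=
    {h | ∀ j, ¬((h j).run w = some (x i) ∨ (h j).run w = none)} with hSin
  have hset : {dec : Fin n → Fin (r+1) → TreeD n m |
      ∀ j, ¬((dec i j).run w = some (x i) ∨ (dec i j).run w = none)}
      = {g | ∀ i', g i' ∈ (if i' = i then Sin else Set.univ)} := by
    ext dec
    constructor
    · intro h i'
      by_cases hii : i' = i
      · subst hii; rw [if_pos rfl]; exact h
      · rw [if_neg hii]; trivial
    · intro h
      have h2 := h i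
      rw [if_pos rfl] at h2
      exact h2
  rw [hset, piFin_om_cyl]
  have hother : ∀ i' ∈ Finset.univ, i' ≠ i →
      (PMF.piFin (fun _ : Fin (r+1) => Dp i')).toOuterMeasure
        (if i' = i then Sin else Set.univ) = 1 := by
    intro i' _ hii
    rw [if_neg hii, toOuterMeasure_univ]
  rw [Finset.prod_eq_single i hother (by simp), if_pos rfl]
  have hcyl : Sin = {g : Fin (r+1) → TreeD n m |
      ∀ j, g j ∈ {S : TreeD n m | ¬(S.run w = some (x i) ∨ S.run w = none)}} := rfl
  rw [hcyl, piFin_om_cyl]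
  calc ∏ _j : Fin (r+1), (Dp i).toOuterMeasure
        {S : TreeD n m | ¬(S.run w = some (x i) ∨ S.run w = none)}
      ≤ (1/3 : ℝ≥0∞) ^ (Finset.univ : Finset (Fin (r+1))).card :=
        Finset.prod_le_pow_card _ _ _ (fun j _ => hc i)
    _ = (1/3 : ℝ≥0∞)^(r+1) := by simp

/-- soundness bound for one simulation copy -/
lemma sound_copy_bound (DTp : PMF (TreeX n k))
    (Dp : Fin n → PMF (TreeD n m)) (w : Fin m → ZMod n) (x : Fin n → ZMod n) (q : ℕ)
    (hq : ∀ T ∈ DTp.support, (T.seen x (k+1)).card ≤ q)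
    (hc : ∀ i, (Dp i).toOuterMeasure
      {S : TreeD n m | ¬(S.run w = some (x i) ∨ S.run w = none)} ≤ 1/3) :
    (DTp.prodP (PMF.piFin (fun i => PMF.piFin (fun _ : Fin (r+1) => Dp i)))).toOuterMeasure
        {cp : Copy n m k r | simOutW cp w = true}
      ≤ DTp.toOuterMeasure {T | T.run x = true} + q * (1/3 : ℝ≥0∞)^(r+1) := by
  classical
  set decPi := PMF.piFin (fun i => PMF.piFin (fun _ : Fin (r+1) => Dp i)) with hdecPi
  have hincl : {cp : Copy n m k r | simOutW cp w = true}
      ⊆ {cp : Copy n m k r | cp.1.run x = true}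
        ∪ {cp : Copy n m k r | ∃ i ∈ cp.1.seen x (k+1),
            ∀ j, ¬((cp.2 i j).run w = some (x i) ∨ (cp.2 i j).run w = none)} := by
    intro cp hcp
    by_cases hbad : ∃ i ∈ cp.1.seen x (k+1),
        ∀ j, ¬((cp.2 i j).run w = some (x i) ∨ (cp.2 i j).run w = none)
    · exact Or.inr hbad
    · left
      refine run_true_of_simOutW_true cp w x ?_ hcp
      intro i hi
      by_contra hdec
      exact hbad ⟨i, hi, decValW_all_wrong cp.2 w (x i) i hdec⟩
  refine (measure_mono hincl).trans ((measure_union_le _ _).trans (add_le_add ?_ ?_))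
  · have : {cp : Copy n m k r | cp.1.run x = true}
        = {ω : Copy n m k r | ω.1 ∈ {T : TreeX n k | T.run x = true}} := rfl
    rw [this, prodP_marg_fst]
  · rw [prodP_om]
    have hpt : ∀ T : TreeX n k,
        DTp T * decPi.toOuterMeasure {dec | (T, dec) ∈
            {cp : Copy n m k r | ∃ i ∈ cp.1.seen x (k+1),
              ∀ j, ¬((cp.2 i j).run w = some (x i) ∨ (cp.2 i j).run w = none)}}
          ≤ DTp T * (q * (1/3 : ℝ≥0∞)^(r+1)) := by
      intro T
      by_cases hT : DTp T = 0
      · simp [hT]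
      · refine mul_le_mul_right ?_ _
        have hTsupp : T ∈ DTp.support := by rwa [mem_support_iff]
        have hev : {dec : Fin n → Fin (r+1) → TreeD n m | (T, dec) ∈
            {cp : Copy n m k r | ∃ i ∈ cp.1.seen x (k+1),
              ∀ j, ¬((cp.2 i j).run w = some (x i) ∨ (cp.2 i j).run w = none)}}
            = ⋃ i ∈ (T.seen x (k+1) : Finset (Fin n)),
                {dec : Fin n → Fin (r+1) → TreeD n m |
                  ∀ j, ¬((dec i j).run w = some (x i) ∨ (dec i j).run w = none)} := by
          ext dec
          simp only [Set.mem_setOf_eq, Set.mem_iUnion]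
          constructor
          · rintro ⟨i, hi, hj⟩; exact ⟨i, hi, hj⟩
          · rintro ⟨i, hi, hj⟩; exact ⟨i, hi, hj⟩
        rw [hev]
        refine (measure_biUnion_finset_le _ _).trans ?_
        calc ∑ i ∈ T.seen x (k+1), decPi.toOuterMeasure
              {dec : Fin n → Fin (r+1) → TreeD n m |
                ∀ j, ¬((dec i j).run w = some (x i) ∨ (dec i j).run w = none)}
            ≤ ∑ _i ∈ T.seen x (k+1), (1/3 : ℝ≥0∞)^(r+1) :=
              Finset.sum_le_sum fun i _ => decPi_wrong_bound Dp w x i hc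
          _ = (T.seen x (k+1)).card * (1/3 : ℝ≥0∞)^(r+1) := by
              rw [Finset.sum_const, nsmul_eq_mul]
          _ ≤ q * (1/3 : ℝ≥0∞)^(r+1) := by
              refine mul_le_mul_left ?_ _
              exact_mod_cast Nat.cast_le.mpr (hq T hTsupp)
    calc ∑' T, DTp T * decPi.toOuterMeasure _ ≤ ∑' T, DTp T * (q * (1/3 : ℝ≥0∞)^(r+1)) :=
          ENNReal.tsum_le_tsum hpt
      _ = (∑' T, DTp T) * (q * (1/3 : ℝ≥0∞)^(r+1)) := ENNReal.tsum_mul_right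
      _ = q * (1/3 : ℝ≥0∞)^(r+1) := by rw [DTp.tsum_coe, one_mul]

/-- with perfect decoding, the simulation agrees with the real run almost surely -/
lemma complete_copy_zero (DTp : PMF (TreeX n k))
    (Dp : Fin n → PMF (TreeD n m)) (w : Fin m → ZMod n) (x : Fin n → ZMod n)
    (hperf : ∀ i, (Dp i).toOuterMeasure {S : TreeD n m | S.run w = some (x i)} = 1) :
    (DTp.prodP (PMF.piFin (fun i => PMF.piFin (fun _ : Fin (r+1) => Dp i)))).toOuterMeasure
        {cp : Copy n m k r | ¬ (simOutW cp w = cp.1.run x)} = 0 := by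
  have hincl : {cp : Copy n m k r | ¬ (simOutW cp w = cp.1.run x)}
      ⊆ {ω : Copy n m k r | ω.2 ∈
          {dec : Fin n → Fin (r+1) → TreeD n m |
            ∀ i, dec i ∈ {h : Fin (r+1) → TreeD n m |
              ∀ j, h j ∈ {S : TreeD n m | S.run w = some (x i)}}}ᶜ} := by
    intro cp hcp
    simp only [Set.mem_setOf_eq, Set.mem_compl_iff] at hcp ⊢
    intro hall
    exact hcp (simOutW_eq_of_correct cp w x hall)
  refine le_antisymm ((measure_mono hincl).trans ?_) zero_le
  rw [prodP_marg_snd, toOuterMeasure_compl]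
  have : (PMF.piFin (fun i => PMF.piFin (fun _ : Fin (r+1) => Dp i))).toOuterMeasure
      {dec : Fin n → Fin (r+1) → TreeD n m |
        ∀ i, dec i ∈ {h : Fin (r+1) → TreeD n m |
          ∀ j, h j ∈ {S : TreeD n m | S.run w = some (x i)}}} = 1 := by
    rw [piFin_om_cyl]
    refine Finset.prod_eq_one fun i _ => ?_
    rw [piFin_om_cyl]
    exact Finset.prod_eq_one fun j _ => hperf i
  rw [this]
  simp

end PTDT
namespace PTDT
open Adaptivity PMF MeasureTheory

variable {α : Type} {n m k r M : ℕ}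

lemma third_le_720 : (1/3 : ℝ≥0∞) ≤ 7/20 := by
  rw [eo_third, eo_frac 7 20]
  exact ENNReal.ofReal_le_ofReal (by norm_num)

lemma rej_pow_le (s : ℝ) (hs : 0 < s) (M : ℕ) (hM : 2 ≤ s * M) :
    (max (1 - s) 0)^M ≤ 1/3 := by
  have hM0 : M ≠ 0 := by
    rintro rfl
    simp at hM
    linarith
  by_cases h1 : 1 ≤ s
  · rw [max_eq_right (by linarith)]
    rw [zero_pow hM0]
    norm_num
  · push_neg at h1
    rw [max_eq_left (by linarith)]
    have hexp : (1 - s) ≤ Real.exp (-s) := by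
      have := Real.add_one_le_exp (-s)
      linarith
    calc (1 - s)^M ≤ (Real.exp (-s))^M := by
          apply pow_le_pow_left₀ (by linarith) hexp
      _ = Real.exp (-(s * M)) := by
          rw [← Real.exp_nat_mul]
          ring_nf
      _ ≤ Real.exp (-2) := Real.exp_le_exp.mpr (by linarith)
      _ ≤ 1/3 := by
          rw [Real.exp_neg]
          have h3 : (3:ℝ) ≤ Real.exp 2 := by
            have := Real.add_one_le_exp (2:ℝ)
            linarith
          rw [one_div]
          exact inv_anti₀ (by norm_num) h3

lemma q3r_real (q : ℕ) : (q:ℝ) * (1/3)^(⌈Real.logb 2 q⌉₊ + 7) ≤ 1/128 := by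
  rcases Nat.eq_zero_or_pos q with hq | hq
  · subst hq; simp
  · have hq1 : (1:ℝ) ≤ q := by exact_mod_cast hq
    set c : ℕ := ⌈Real.logb 2 q⌉₊ with hc
    have hlogb : Real.logb 2 q ≤ c := Nat.le_ceil _
    have h23 : ((1:ℝ)/3)^(c+7) ≤ (1/2)^(c+7) :=
      pow_le_pow_left₀ (by norm_num) (by norm_num) _
    have hhalf : ((1:ℝ)/2)^c ≤ 1 / q := by
      have h2 : ((1:ℝ)/2)^(c:ℕ) = ((1:ℝ)/2)^((c:ℕ):ℝ) := by
        rw [Real.rpow_natCast]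
      rw [h2]
      have hmono : ((1:ℝ)/2)^((c:ℕ):ℝ) ≤ ((1:ℝ)/2)^(Real.logb 2 q) :=
        Real.rpow_le_rpow_of_exponent_ge (by norm_num) (by norm_num) hlogb
      refine hmono.trans ?_
      rw [one_div, Real.inv_rpow (by norm_num), Real.rpow_logb (by norm_num) (by norm_num)
        (by positivity), one_div]
    calc (q:ℝ) * (1/3)^(c+7) ≤ (q:ℝ) * ((1/2)^c * (1/2)^7) := by
          rw [← pow_add]
          exact mul_le_mul_of_nonneg_left h23 (by positivity)
      _ ≤ (q:ℝ) * ((1/q) * (1/2)^7) := by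
          refine mul_le_mul_of_nonneg_left ?_ (by positivity)
          exact mul_le_mul_of_nonneg_right hhalf (by positivity)
      _ = (1/2)^7 := by
          field_simp
      _ ≤ 1/128 := by norm_num

lemma soundB_numeric (q : ℕ) :
    (1/3 : ℝ≥0∞) + (q:ℝ≥0∞) * (1/3 : ℝ≥0∞)^(⌈Real.logb 2 q⌉₊ + 6 + 1) ≤ 7/20 := by
  have h1 : ((q:ℝ≥0∞)) * (1/3 : ℝ≥0∞)^(⌈Real.logb 2 q⌉₊ + 6 + 1)
      = ENNReal.ofReal ((q:ℝ) * (1/3)^(⌈Real.logb 2 q⌉₊ + 7)) := by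
    rw [eo_third, ← ENNReal.ofReal_natCast q,
      ← ENNReal.ofReal_pow (by norm_num : (0:ℝ) ≤ 1/3),
      ← ENNReal.ofReal_mul (by positivity)]
  rw [h1, eo_third, eo_frac 7 20, ← ENNReal.ofReal_add (by norm_num) (by positivity)]
  refine ENNReal.ofReal_le_ofReal ?_
  have := q3r_real q
  norm_num at this ⊢
  linarith

lemma hamDist_nonneg {D R : Type} [DecidableEq D] [Fintype D] (f g : D → R) :
    0 ≤ Adaptivity.hamDist f g := by
  rw [Adaptivity.hamDist]
  positivity

lemma hamDist_self {D R : Type} [DecidableEq D] [Fintype D] (f : D → R) :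
    Adaptivity.hamDist f f = 0 := by
  rw [Adaptivity.hamDist]
  have : {x : D | f x ≠ f x} = ∅ := by ext x; simp
  rw [this]
  simp

lemma distToProp_le {D R : Type} [DecidableEq D] [Fintype D] (f : D → R)
    (P : Set (D → R)) (g : D → R) (hg : g ∈ P) :
    Adaptivity.distToProp f P ≤ Adaptivity.hamDist f g := by
  refine csInf_le ⟨0, fun y hy => ?_⟩ (Set.mem_image_of_mem _ hg)
  obtain ⟨h, _, rfl⟩ := hy
  exact hamDist_nonneg f h

end PTDT
namespace PTDT
open Adaptivity PMF MeasureTheory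

variable {n m k r M : ℕ}

lemma comb_run_true_iff (ω : Omega n m k r M) (w : Fin m → ZMod n) :
    ((comb ω).run w = true) ↔
      ((∀ j, (ω.1 j).run w = true)
        ∧ maj3 (simOutW ω.2.1 w) (simOutW ω.2.2.1 w) (simOutW ω.2.2.2 w) = true) := by
  rw [comb_run]
  split_ifs with h
  · simp [h]
  · simp [h]

lemma tst_amp (Tp : PMF (TreeT n m)) (w : Fin m → ZMod n) (s : ℝ) (hs : 0 < s) (M : ℕ)
    (hM : 2 ≤ s * M)
    (hrej : ENNReal.ofReal s ≤ Tp.toOuterMeasure {S : TreeT n m | S.run w = false}) :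
    (PMF.piFin (fun _ : Fin M => Tp)).toOuterMeasure
        {t | ∀ j, (t j).run w = true} ≤ 1/3 := by
  have hset : {t : Fin M → TreeT n m | ∀ j, (t j).run w = true}
      = {t | ∀ j, t j ∈ {S : TreeT n m | S.run w = true}} := rfl
  rw [hset, piFin_om_cyl]
  have hacc : Tp.toOuterMeasure {S : TreeT n m | S.run w = true}
      ≤ ENNReal.ofReal (max (1-s) 0) := by
    have h1 : {S : TreeT n m | S.run w = true} = {S : TreeT n m | S.run w = false}ᶜ := by
      ext S; simp
    rw [h1, toOuterMeasure_compl]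
    calc 1 - Tp.toOuterMeasure {S : TreeT n m | S.run w = false}
        ≤ 1 - ENNReal.ofReal s := tsub_le_tsub_left hrej 1
      _ = ENNReal.ofReal 1 - ENNReal.ofReal s := by rw [ENNReal.ofReal_one]
      _ = ENNReal.ofReal (1 - s) := by rw [← ENNReal.ofReal_sub _ hs.le]
      _ ≤ ENNReal.ofReal (max (1-s) 0) := ENNReal.ofReal_le_ofReal (le_max_left _ _)
  calc ∏ _j : Fin M, Tp.toOuterMeasure {S : TreeT n m | S.run w = true}
      ≤ ENNReal.ofReal (max (1-s) 0) ^ (Finset.univ : Finset (Fin M)).card :=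
        Finset.prod_le_pow_card _ _ _ (fun j _ => hacc)
    _ = ENNReal.ofReal (max (1-s) 0) ^ M := by simp
    _ = ENNReal.ofReal ((max (1-s) 0) ^ M) := (ENNReal.ofReal_pow (le_max_right _ _) M).symm
    _ ≤ ENNReal.ofReal (1/3) := ENNReal.ofReal_le_ofReal (rej_pow_le s hs M hM)
    _ = 1/3 := eo_third.symm

end PTDT
set_option maxHeartbeats 1000000 in
open PTDT PMF MeasureTheory in
open Adaptivity in
/-- PT ⇝ DT reduction. Given a linear code `C : 𝔽_n^n → 𝔽_n^m` with
relative distance `δC` that is a strong LTC (with `q_T` non-adaptive queries, rejection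
probability `≥ a₁·dist(w,𝒞)^{c₁}`) and a relaxed LDC (with `q_D` non-adaptive queries,
decoding radius `δ_r < δC/2`), there is a constant `A` depending only on `q_T, q_D`
such that any `f` computable by a randomized `(k,q)`-round-adaptive decision tree
yields, for every `ε ∈ (0,1]`, a `(k, A·q·(log₂ q + 2) + A·⌈1/(a₁·min(δ_r,ε)^{c₁})⌉)`-
round-adaptive `ε`-tester for `C_f = {C(x) : f(x) = 1}`; moreover if the decision tree
is always correct then the tester is one-sided. -/
theorem tester_of_dt (qT qD : ℕ) :
    ∃ A : ℝ, 0 < A ∧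
    ∀ (n m : ℕ), n.Prime →
    ∀ C : (Fin n → ZMod n) →ₗ[ZMod n] (Fin m → ZMod n), Function.Injective C →
    ∀ δC : ℝ, 0 < δC → δC ≤ 1 →
    (∀ x x' : Fin n → ZMod n, x ≠ x' → δC ≤ hamDist (C x) (C x')) →
    ∀ (Tst : PMF (DetAlg (Fin m) (ZMod n) Bool 0)) (a₁ c₁ : ℝ), 0 < a₁ → 1 ≤ c₁ →
    queryBound Tst (qT : ℝ) →
    (∀ w : Fin m → ZMod n, w ∈ Set.range (fun x => C x) →
      probOut Tst w (· = true) = 1) →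
    (∀ w : Fin m → ZMod n, w ∉ Set.range (fun x => C x) →
      ENNReal.ofReal (a₁ * distToProp w (Set.range (fun x => C x)) ^ c₁) ≤
        probOut Tst w (· = false)) →
    ∀ (Dec : Fin n → PMF (DetAlg (Fin m) (ZMod n) (Option (ZMod n)) 0)) (δr : ℝ),
    0 < δr → δr < δC / 2 →
    (∀ i : Fin n, queryBound (Dec i) (qD : ℝ)) →
    (∀ (x : Fin n → ZMod n) (i : Fin n), probOut (Dec i) (C x) (· = some (x i)) = 1) →
    (∀ (w : Fin m → ZMod n) (x : Fin n → ZMod n) (i : Fin n),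
      hamDist w (C x) ≤ δr →
      (2 : ℝ≥0∞) / 3 ≤ probOut (Dec i) w (fun o => o = some (x i) ∨ o = none)) →
    ∀ f : (Fin n → ZMod n) → Bool, (∃ x, f x = true) →
    ∀ (k q : ℕ) (DT : PMF (DetAlg (Fin n) (ZMod n) Bool k)),
    queryBound DT (q : ℝ) →
    (∀ x : Fin n → ZMod n, (2 : ℝ≥0∞) / 3 ≤ probOut DT x (· = f x)) →
    ∀ ε : ℝ, 0 < ε → ε ≤ 1 →
      ∃ q' : ℝ,
        q' ≤ A * q * (Real.logb 2 q + 2) +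
          A * (⌈1 / (a₁ * (min δr ε) ^ c₁)⌉₊ : ℝ) ∧
        ∃ Test : PMF (DetAlg (Fin m) (ZMod n) Bool k),
          IsTester q' ε {w : Fin m → ZMod n | ∃ x, f x = true ∧ C x = w} Test ∧
          ((∀ x : Fin n → ZMod n, probOut DT x (· = f x) = 1) →
            OneSidedTester {w : Fin m → ZMod n | ∃ x, f x = true ∧ C x = w} Test) := by
  classical
  refine ⟨12*qT + 12*qD + 12, by positivity, ?_⟩
  intro n m hp C hC δC hδC0 hδC1 hδCd Tst a₁ c₁ ha₁ hc₁ hTstQB hTstC hTstS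
    Dec δr hδr0 hδrhalf hDecQB hDecC hDecS f hfex k q DT hDTQB hDTC ε hε0 hε1
  haveI : NeZero n := ⟨hp.ne_zero⟩
  set A : ℝ := 12*qT + 12*qD + 12 with hA
  set μ : ℝ := min δr ε with hμ
  have hμ0 : 0 < μ := lt_min hδr0 hε0
  set s : ℝ := a₁ * μ ^ c₁ with hs
  have hs0 : 0 < s := mul_pos ha₁ (Real.rpow_pos_of_pos hμ0 c₁)
  set M : ℕ := 2 * ⌈1/s⌉₊ with hM
  set r' : ℕ := ⌈Real.logb 2 q⌉₊ + 6 with hr'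
  set P : Set (Fin m → ZMod n) := {w | ∃ x, f x = true ∧ C x = w} with hP
  set CodeSet : Set (Fin m → ZMod n) := Set.range (fun x => C x) with hCodeSet
  -- the randomness of the tester
  set tstPi : PMF (Fin M → TreeT n m) := PMF.piFin (fun _ : Fin M => Tst) with htstPi
  set decPi : PMF (Fin n → Fin (r'+1) → TreeD n m) :=
    PMF.piFin (fun i => PMF.piFin (fun _ : Fin (r'+1) => Dec i)) with hdecPi
  set cpP : PMF (Copy n m k r') := DT.prodP decPi with hcpP
  set Ω : PMF (Omega n m k r' M) := tstPi.prodP (cpP.prodP (cpP.prodP cpP)) with hΩ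
  set Test : PMF (DetAlg (Fin m) (ZMod n) Bool k) := Ω.map comb with hTest
  set q'n : ℕ := M * qT + 3 * (q * ((r'+1) * qD)) with hq'n
  refine ⟨(q'n : ℝ), ?_, Test, ⟨?_, ?_, ?_⟩, ?_⟩
  · -- the query bound arithmetic
    have hqnn : (0:ℝ) ≤ (q:ℝ) := Nat.cast_nonneg _
    have hqTnn : (0:ℝ) ≤ (qT:ℝ) := Nat.cast_nonneg _
    have hqDnn : (0:ℝ) ≤ (qD:ℝ) := Nat.cast_nonneg _
    have hcnn : (0:ℝ) ≤ (⌈1/s⌉₊:ℝ) := Nat.cast_nonneg _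
    have hlogb0 : 0 ≤ Real.logb 2 (q:ℝ) := by
      rcases Nat.eq_zero_or_pos q with h | h
      · subst h; simp
      · exact Real.logb_nonneg (by norm_num) (by exact_mod_cast h)
    have hceil : ((r':ℝ)+1) ≤ Real.logb 2 (q:ℝ) + 8 := by
      rw [hr']
      push_cast
      have := Nat.ceil_lt_add_one hlogb0
      linarith
    have h4 : ((r':ℝ)+1) ≤ 4*(Real.logb 2 (q:ℝ) + 2) := by linarith
    have hcast : (q'n : ℝ) = (M:ℝ)*qT + 3*((q:ℝ)*(((r':ℝ)+1)*qD)) := by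
      rw [hq'n]; push_cast; ring
    have hMcast : (M:ℝ) = 2*(⌈1/s⌉₊:ℝ) := by rw [hM]; push_cast; ring
    rw [hcast, hMcast]
    have hpart1 : 2*(⌈1/s⌉₊:ℝ)*qT ≤ A * (⌈1/s⌉₊:ℝ) := by
      rw [hA]
      nlinarith [mul_nonneg hcnn hqTnn, mul_nonneg hcnn hqDnn, hcnn]
    have hpart2 : 3*((q:ℝ)*(((r':ℝ)+1)*qD)) ≤ A * q * (Real.logb 2 (q:ℝ) + 2) := by
      rw [hA]
      have hb : (0:ℝ) ≤ 3*(q:ℝ)*qD := by positivity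
      have h5 := mul_le_mul_of_nonneg_left h4 hb
      nlinarith [mul_nonneg (mul_nonneg hqnn (by linarith : (0:ℝ) ≤ Real.logb 2 (q:ℝ) + 2))
        hqTnn, mul_nonneg (mul_nonneg hqnn
          (by linarith : (0:ℝ) ≤ Real.logb 2 (q:ℝ) + 2)) hqDnn,
        mul_nonneg hqnn (by linarith : (0:ℝ) ≤ Real.logb 2 (q:ℝ) + 2)]
    exact le_trans (add_le_add hpart1 hpart2) (le_of_eq (by ring))
  · -- queryBound Test q'
    intro T hT f'
    rw [hTest, PMF.support_map] at hT
    obtain ⟨ω, hω, rfl⟩ := hT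
    have hω1 := (PMF.mem_support_prodP hω).1
    have hω2 := (PMF.mem_support_prodP hω).2
    have hcp1 := (PMF.mem_support_prodP hω2).1
    have hrest := (PMF.mem_support_prodP hω2).2
    have hcp2 := (PMF.mem_support_prodP hrest).1
    have hcp3 := (PMF.mem_support_prodP hrest).2
    have hcopyfacts : ∀ cp ∈ [ω.2.1, ω.2.2.1, ω.2.2.2], cp ∈ cpP.support := by
      intro cp hcp
      simp only [List.mem_cons, List.not_mem_nil, or_false] at hcp
      rcases hcp with h | h | h <;> subst h <;> assumption
    have hTb : ∀ j, ((ω.1 j).Q0).card ≤ qT := by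
      intro j
      have hj : ω.1 j ∈ Tst.support := PMF.mem_support_piFin hω1 j
      have h2 := hTstQB _ hj f'
      rw [DetAlg.totalQueries_zero_round] at h2
      exact_mod_cast h2
    have hDb : ∀ cp ∈ [ω.2.1, ω.2.2.1, ω.2.2.2], ∀ i j', ((cp.2 i j').Q0).card ≤ qD := by
      intro cp hcp i j'
      have h2 := (PMF.mem_support_prodP (hcopyfacts cp hcp)).2
      have hij := PMF.mem_support_piFin (PMF.mem_support_piFin h2 i) j'
      have h3 := hDecQB i _ hij f'
      rw [DetAlg.totalQueries_zero_round] at h3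
      exact_mod_cast h3
    have hqb : ∀ cp ∈ [ω.2.1, ω.2.2.1, ω.2.2.2],
        cp.1.totalQueries (xhatW cp.2 f') ≤ q := by
      intro cp hcp
      have h1 := (PMF.mem_support_prodP (hcopyfacts cp hcp)).1
      have h2 := hDTQB _ h1 (xhatW cp.2 f')
      exact_mod_cast h2
    have := comb_totalQueries_le ω f' hTb hDb hqb
    rw [hq'n]
    exact_mod_cast this
  · -- completeness
    intro w hw
    obtain ⟨x, hfx, hCx⟩ := hw
    have hprob : probOut Test w (· = true)
        = Ω.toOuterMeasure {ω : Omega n m k r' M | (comb ω).run w = true} := by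
      rw [hTest, Adaptivity.probOut, PMF.toOuterMeasure_map_apply]
      rfl
    set A1 : Set (Fin M → TreeT n m) := {t | ∀ j, (t j).run w = true} with hA1
    set Gc : Set (Copy n m k r') := {cp | simOutW cp w = cp.1.run x} with hGc
    set Smaj : Set (Copy n m k r' × (Copy n m k r' × Copy n m k r')) :=
      {σ | maj3 (σ.1.1.run x) (σ.2.1.1.run x) (σ.2.2.1.run x) = true} with hSmaj
    have hsub : {ω : Omega n m k r' M | (comb ω).run w = true}ᶜ ⊆
        {ω : Omega n m k r' M | ω.1 ∈ A1ᶜ}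
        ∪ ({ω : Omega n m k r' M | ω.2 ∈ Smajᶜ}
          ∪ ({ω : Omega n m k r' M | ω.2.1 ∈ Gcᶜ}
            ∪ {ω : Omega n m k r' M | ω.2.2.1 ∈ Gcᶜ}
            ∪ {ω : Omega n m k r' M | ω.2.2.2 ∈ Gcᶜ})) := by
      intro ω hω
      by_contra hcon
      simp only [Set.mem_union, not_or] at hcon
      obtain ⟨n1, n2, ⟨n3, n4⟩, n5⟩ := hcon
      have h1 : ω.1 ∈ A1 := by by_contra hx; exact n1 hx
      have h2 : ω.2 ∈ Smaj := by by_contra hx; exact n2 hx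
      have h3 : ω.2.1 ∈ Gc := by by_contra hx; exact n3 hx
      have h4 : ω.2.2.1 ∈ Gc := by by_contra hx; exact n4 hx
      have h5 : ω.2.2.2 ∈ Gc := by by_contra hx; exact n5 hx
      refine hω ?_
      show (comb ω).run w = true
      rw [comb_run_true_iff]
      refine ⟨h1, ?_⟩
      have e3 : simOutW ω.2.1 w = ω.2.1.1.run x := h3
      have e4 : simOutW ω.2.2.1 w = ω.2.2.1.1.run x := h4
      have e5 : simOutW ω.2.2.2 w = ω.2.2.2.1.run x := h5
      rw [e3, e4, e5]
      exact h2
    have hA1om : tstPi.toOuterMeasure A1 = 1 := by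
      rw [htstPi]
      have he : A1 = {t : Fin M → TreeT n m |
          ∀ j, t j ∈ {S : TreeT n m | S.run w = true}} := rfl
      rw [he, piFin_om_cyl]
      refine Finset.prod_eq_one fun j _ => ?_
      exact hTstC w ⟨x, hCx⟩
    have hom1 : Ω.toOuterMeasure {ω : Omega n m k r' M | ω.1 ∈ A1ᶜ} = 0 := by
      rw [hΩ, prodP_marg_fst, toOuterMeasure_compl, hA1om]
      simp
    have hGcom : cpP.toOuterMeasure Gcᶜ = 0 := by
      have hperf : ∀ i, (Dec i).toOuterMeasure
          {S : TreeD n m | S.run w = some (x i)} = 1 := by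
        intro i
        have h2 := hDecC x i
        rw [hCx] at h2
        exact h2
      have hset : Gcᶜ = {cp : Copy n m k r' | ¬ (simOutW cp w = cp.1.run x)} := by
        rw [hGc, Set.compl_setOf]
      rw [hset, hcpP, hdecPi]
      exact complete_copy_zero DT Dec w x hperf
    have hom3 : Ω.toOuterMeasure {ω : Omega n m k r' M | ω.2.1 ∈ Gcᶜ} = 0 := by
      have h1 : {ω : Omega n m k r' M | ω.2.1 ∈ Gcᶜ}
          = {ω : Omega n m k r' M | ω.2 ∈
              {σ : Copy n m k r' × (Copy n m k r' × Copy n m k r') | σ.1 ∈ Gcᶜ}} := rfl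
      rw [hΩ, h1, prodP_marg_snd, prodP_marg_fst, hGcom]
    have hom4 : Ω.toOuterMeasure {ω : Omega n m k r' M | ω.2.2.1 ∈ Gcᶜ} = 0 := by
      have h1 : {ω : Omega n m k r' M | ω.2.2.1 ∈ Gcᶜ}
          = {ω : Omega n m k r' M | ω.2 ∈
              {σ : Copy n m k r' × (Copy n m k r' × Copy n m k r') | σ.2 ∈
                {τ : Copy n m k r' × Copy n m k r' | τ.1 ∈ Gcᶜ}}} := rfl
      rw [hΩ, h1, prodP_marg_snd, prodP_marg_snd, prodP_marg_fst, hGcom]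
    have hom5 : Ω.toOuterMeasure {ω : Omega n m k r' M | ω.2.2.2 ∈ Gcᶜ} = 0 := by
      have h1 : {ω : Omega n m k r' M | ω.2.2.2 ∈ Gcᶜ}
          = {ω : Omega n m k r' M | ω.2 ∈
              {σ : Copy n m k r' × (Copy n m k r' × Copy n m k r') | σ.2 ∈
                {τ : Copy n m k r' × Copy n m k r' | τ.2 ∈ Gcᶜ}}} := rfl
      rw [hΩ, h1, prodP_marg_snd, prodP_marg_snd, prodP_marg_snd, hGcom]
    have hDT13 : cpP.toOuterMeasure {cp : Copy n m k r' | (!(cp.1.run x)) = true} ≤ 1/3 := by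
      have hset2 : {cp : Copy n m k r' | (!(cp.1.run x)) = true}
          = {ω : Copy n m k r' | ω.1 ∈ {T : TreeX n k | T.run x = false}} := by
        ext cp; simp
      rw [hset2, hcpP, prodP_marg_fst]
      have h2 := hDTC x
      rw [hfx] at h2
      have hsetf : {T : TreeX n k | T.run x = false}
          = {T : TreeX n k | T.run x = true}ᶜ := by
        ext T; simp
      rw [hsetf]
      exact (om_compl_le h2).trans one_sub_twothirds
    have hom2 : Ω.toOuterMeasure {ω : Omega n m k r' M | ω.2 ∈ Smajᶜ} ≤ 1/3 := by
      rw [hΩ, prodP_marg_snd]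
      have hsetc : Smajᶜ = {σ : Copy n m k r' × (Copy n m k r' × Copy n m k r') |
          maj3 (!(σ.1.1.run x)) (!(σ.2.1.1.run x)) (!(σ.2.2.1.run x)) = true} := by
        rw [hSmaj, Set.compl_setOf]
        ext σ
        simp only [Set.mem_setOf_eq, Bool.not_eq_true]
        exact maj3_not _ _ _
      rw [hsetc]
      refine le_trans (maj3_bound cpP cpP cpP (fun cp => !(cp.1.run x))
        (fun cp => !(cp.1.run x)) (fun cp => !(cp.1.run x)) (1/3) hDT13 hDT13 hDT13) ?_
      exact maj3_numeric third_le_720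
    have htot : Ω.toOuterMeasure {ω : Omega n m k r' M | (comb ω).run w = true}ᶜ ≤ 1/3 := by
      refine (measure_mono hsub).trans ((measure_union_le _ _).trans ?_)
      rw [hom1, zero_add]
      refine (measure_union_le _ _).trans ?_
      have hrest : Ω.toOuterMeasure
          ({ω : Omega n m k r' M | ω.2.1 ∈ Gcᶜ}
            ∪ {ω : Omega n m k r' M | ω.2.2.1 ∈ Gcᶜ}
            ∪ {ω : Omega n m k r' M | ω.2.2.2 ∈ Gcᶜ}) = 0 := by
        refine le_antisymm ?_ zero_le
        refine (measure_union_le _ _).trans ?_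
        rw [hom5]
        refine le_trans (add_le_add_left (measure_union_le _ _) _) ?_
        rw [hom3, hom4]
        simp
      rw [hrest, add_zero]
      exact hom2
    rw [hprob, om_eq_one_sub_compl]
    calc (2:ℝ≥0∞)/3 ≤ 1 - 1/3 := one_sub_third
      _ ≤ 1 - Ω.toOuterMeasure {ω : Omega n m k r' M | (comb ω).run w = true}ᶜ :=
          tsub_le_tsub_left htot 1
  · -- soundness
    intro w hfar
    have hprob : probOut Test w (· = false)
        = Ω.toOuterMeasure {ω : Omega n m k r' M | (comb ω).run w = false} := by
      rw [hTest, Adaptivity.probOut, PMF.toOuterMeasure_map_apply]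
      rfl
    have hsetc : {ω : Omega n m k r' M | (comb ω).run w = false}
        = {ω : Omega n m k r' M | (comb ω).run w = true}ᶜ := by
      ext ω; simp
    suffices hacc : Ω.toOuterMeasure
        {ω : Omega n m k r' M | (comb ω).run w = true} ≤ 1/3 by
      rw [hprob, hsetc, toOuterMeasure_compl]
      calc (2:ℝ≥0∞)/3 ≤ 1 - 1/3 := one_sub_third
        _ ≤ 1 - Ω.toOuterMeasure {ω : Omega n m k r' M | (comb ω).run w = true} :=
            tsub_le_tsub_left hacc 1
    by_cases hcase : Adaptivity.distToProp w CodeSet < μ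
    · -- near a codeword C x, necessarily with f x = false
      have hne : (Adaptivity.hamDist w '' CodeSet).Nonempty :=
        ⟨_, Set.mem_image_of_mem _ ⟨(0 : Fin n → ZMod n), rfl⟩⟩
      have hfin : (Adaptivity.hamDist w '' CodeSet).Finite := by
        rw [hCodeSet]
        exact (Set.finite_range _).image _
      have hmem : sInf (Adaptivity.hamDist w '' CodeSet)
          ∈ Adaptivity.hamDist w '' CodeSet := Set.Nonempty.csInf_mem hne hfin
      obtain ⟨u, hu, hequ⟩ := hmem
      obtain ⟨x, hx⟩ := hu
      have hx' : C x = u := hx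
      have hdx : Adaptivity.hamDist w (C x) = Adaptivity.distToProp w CodeSet := by
        rw [Adaptivity.distToProp, ← hequ, hx']
      have hxd : Adaptivity.hamDist w (C x) < μ := by rw [hdx]; exact hcase
      have hδxr : Adaptivity.hamDist w (C x) ≤ δr :=
        le_of_lt (hxd.trans_le (min_le_left _ _))
      have hfx : f x = false := by
        by_contra hfx'
        rw [Bool.not_eq_false] at hfx'
        have hle2 : Adaptivity.distToProp w P ≤ Adaptivity.hamDist w (C x) :=
          distToProp_le w P (C x) ⟨x, hfx', rfl⟩
        have h3 : Adaptivity.distToProp w P < ε :=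
          lt_of_le_of_lt hle2 (hxd.trans_le (min_le_right _ _))
        linarith
      have hsub2 : {ω : Omega n m k r' M | (comb ω).run w = true} ⊆
          {ω : Omega n m k r' M | ω.2 ∈
            {σ : Copy n m k r' × (Copy n m k r' × Copy n m k r') |
              maj3 (simOutW σ.1 w) (simOutW σ.2.1 w) (simOutW σ.2.2 w) = true}} := by
        intro ω hω
        exact ((comb_run_true_iff ω w).mp hω).2
      refine (measure_mono hsub2).trans ?_
      rw [hΩ, prodP_marg_snd]
      have hq7 : ∀ T ∈ DT.support, (T.seen x (k+1)).card ≤ q := by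
        intro T hT
        have h2 := hDTQB T hT x
        have h3 : T.totalQueries x ≤ q := by exact_mod_cast h2
        exact (T.card_seen_le_totalQueries x).trans h3
      have hc13 : ∀ i, (Dec i).toOuterMeasure
          {S : TreeD n m | ¬(S.run w = some (x i) ∨ S.run w = none)} ≤ 1/3 := by
        intro i
        have h2 := hDecS w x i hδxr
        have hsetw : {S : TreeD n m | ¬(S.run w = some (x i) ∨ S.run w = none)}
            = {S : TreeD n m | S.run w = some (x i) ∨ S.run w = none}ᶜ := by
          rw [Set.compl_setOf]
        rw [hsetw]
        exact (om_compl_le h2).trans one_sub_twothirds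
      have hDTf : DT.toOuterMeasure {T : TreeX n k | T.run x = true} ≤ 1/3 := by
        have h2 := hDTC x
        rw [hfx] at h2
        have hsetf : {T : TreeX n k | T.run x = true}
            = {T : TreeX n k | T.run x = false}ᶜ := by
          ext T; simp
        rw [hsetf]
        exact (om_compl_le h2).trans one_sub_twothirds
      have hcopy : cpP.toOuterMeasure
          {cp : Copy n m k r' | simOutW cp w = true} ≤ 7/20 := by
        rw [hcpP, hdecPi]
        refine (sound_copy_bound DT Dec w x q hq7 hc13).trans ?_
        refine le_trans (add_le_add hDTf le_rfl) ?_
        rw [hr']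
        exact soundB_numeric q
      refine le_trans (maj3_bound cpP cpP cpP (fun cp => simOutW cp w)
        (fun cp => simOutW cp w) (fun cp => simOutW cp w) (7/20) hcopy hcopy hcopy) ?_
      exact maj3_numeric le_rfl
    · -- far from the code: the amplified LTC rejects
      have hle : μ ≤ Adaptivity.distToProp w CodeSet := not_lt.mp hcase
      have hnotin : w ∉ CodeSet := by
        intro hwin
        have h1 := distToProp_le w CodeSet w hwin
        rw [hamDist_self] at h1
        linarith
      have hrej := hTstS w hnotin
      have hsle : s ≤ a₁ * Adaptivity.distToProp w CodeSet ^ c₁ := by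
        rw [hs]
        refine mul_le_mul_of_nonneg_left ?_ ha₁.le
        exact Real.rpow_le_rpow hμ0.le hle (by linarith)
      have hofs : ENNReal.ofReal s
          ≤ Tst.toOuterMeasure {S : TreeT n m | S.run w = false} :=
        le_trans (ENNReal.ofReal_le_ofReal hsle) hrej
      have hM2 : 2 ≤ s * M := by
        rw [hM]
        push_cast
        have hceil2 : 1/s ≤ (⌈1/s⌉₊:ℝ) := Nat.le_ceil _
        have h1 : s * (1/s) ≤ s * (⌈1/s⌉₊:ℝ) := mul_le_mul_of_nonneg_left hceil2 hs0.le
        have hss : s * (1/s) = 1 := by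
          rw [one_div, mul_inv_cancel₀ hs0.ne']
        calc (2:ℝ) = 2*(s*(1/s)) := by rw [hss]; ring
          _ ≤ 2*(s*(⌈1/s⌉₊:ℝ)) := by linarith
          _ = s*(2*(⌈1/s⌉₊:ℝ)) := by ring
      have hsub1 : {ω : Omega n m k r' M | (comb ω).run w = true} ⊆
          {ω : Omega n m k r' M | ω.1 ∈
            {t : Fin M → TreeT n m | ∀ j, (t j).run w = true}} := by
        intro ω hω
        exact ((comb_run_true_iff ω w).mp hω).1
      refine (measure_mono hsub1).trans ?_
      rw [hΩ, prodP_marg_fst, htstPi]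
      exact tst_amp Tst w s hs0 M hM2 hofs
  · -- one-sidedness
    intro hperfDT w hw
    obtain ⟨x, hfx, hCx⟩ := hw
    have hprob : probOut Test w (· = true)
        = Ω.toOuterMeasure {ω : Omega n m k r' M | (comb ω).run w = true} := by
      rw [hTest, Adaptivity.probOut, PMF.toOuterMeasure_map_apply]
      rfl
    rw [hprob, om_eq_one_sub_compl]
    suffices h0 : Ω.toOuterMeasure
        {ω : Omega n m k r' M | (comb ω).run w = true}ᶜ = 0 by
      rw [h0]
      simp
    set A1 : Set (Fin M → TreeT n m) := {t | ∀ j, (t j).run w = true} with hA1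
    set Gc : Set (Copy n m k r') := {cp | simOutW cp w = cp.1.run x} with hGc
    set Smaj : Set (Copy n m k r' × (Copy n m k r' × Copy n m k r')) :=
      {σ | maj3 (σ.1.1.run x) (σ.2.1.1.run x) (σ.2.2.1.run x) = true} with hSmaj
    have hsub : {ω : Omega n m k r' M | (comb ω).run w = true}ᶜ ⊆
        {ω : Omega n m k r' M | ω.1 ∈ A1ᶜ}
        ∪ ({ω : Omega n m k r' M | ω.2 ∈ Smajᶜ}
          ∪ ({ω : Omega n m k r' M | ω.2.1 ∈ Gcᶜ}
            ∪ {ω : Omega n m k r' M | ω.2.2.1 ∈ Gcᶜ}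
            ∪ {ω : Omega n m k r' M | ω.2.2.2 ∈ Gcᶜ})) := by
      intro ω hω
      by_contra hcon
      simp only [Set.mem_union, not_or] at hcon
      obtain ⟨n1, n2, ⟨n3, n4⟩, n5⟩ := hcon
      have h1 : ω.1 ∈ A1 := by by_contra hx'; exact n1 hx'
      have h2 : ω.2 ∈ Smaj := by by_contra hx'; exact n2 hx'
      have h3 : ω.2.1 ∈ Gc := by by_contra hx'; exact n3 hx'
      have h4 : ω.2.2.1 ∈ Gc := by by_contra hx'; exact n4 hx'
      have h5 : ω.2.2.2 ∈ Gc := by by_contra hx'; exact n5 hx'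
      refine hω ?_
      show (comb ω).run w = true
      rw [comb_run_true_iff]
      refine ⟨h1, ?_⟩
      have e3 : simOutW ω.2.1 w = ω.2.1.1.run x := h3
      have e4 : simOutW ω.2.2.1 w = ω.2.2.1.1.run x := h4
      have e5 : simOutW ω.2.2.2 w = ω.2.2.2.1.run x := h5
      rw [e3, e4, e5]
      exact h2
    have hA1om : tstPi.toOuterMeasure A1 = 1 := by
      rw [htstPi]
      have he : A1 = {t : Fin M → TreeT n m |
          ∀ j, t j ∈ {S : TreeT n m | S.run w = true}} := rfl
      rw [he, piFin_om_cyl]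
      refine Finset.prod_eq_one fun j _ => ?_
      exact hTstC w ⟨x, hCx⟩
    have hom1 : Ω.toOuterMeasure {ω : Omega n m k r' M | ω.1 ∈ A1ᶜ} = 0 := by
      rw [hΩ, prodP_marg_fst, toOuterMeasure_compl, hA1om]
      simp
    have hGcom : cpP.toOuterMeasure Gcᶜ = 0 := by
      have hperf : ∀ i, (Dec i).toOuterMeasure
          {S : TreeD n m | S.run w = some (x i)} = 1 := by
        intro i
        have h2 := hDecC x i
        rw [hCx] at h2
        exact h2
      have hset : Gcᶜ = {cp : Copy n m k r' | ¬ (simOutW cp w = cp.1.run x)} := by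
        rw [hGc, Set.compl_setOf]
      rw [hset, hcpP, hdecPi]
      exact complete_copy_zero DT Dec w x hperf
    have hom3 : Ω.toOuterMeasure {ω : Omega n m k r' M | ω.2.1 ∈ Gcᶜ} = 0 := by
      have h1 : {ω : Omega n m k r' M | ω.2.1 ∈ Gcᶜ}
          = {ω : Omega n m k r' M | ω.2 ∈
              {σ : Copy n m k r' × (Copy n m k r' × Copy n m k r') | σ.1 ∈ Gcᶜ}} := rfl
      rw [hΩ, h1, prodP_marg_snd, prodP_marg_fst, hGcom]
    have hom4 : Ω.toOuterMeasure {ω : Omega n m k r' M | ω.2.2.1 ∈ Gcᶜ} = 0 := by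
      have h1 : {ω : Omega n m k r' M | ω.2.2.1 ∈ Gcᶜ}
          = {ω : Omega n m k r' M | ω.2 ∈
              {σ : Copy n m k r' × (Copy n m k r' × Copy n m k r') | σ.2 ∈
                {τ : Copy n m k r' × Copy n m k r' | τ.1 ∈ Gcᶜ}}} := rfl
      rw [hΩ, h1, prodP_marg_snd, prodP_marg_snd, prodP_marg_fst, hGcom]
    have hom5 : Ω.toOuterMeasure {ω : Omega n m k r' M | ω.2.2.2 ∈ Gcᶜ} = 0 := by
      have h1 : {ω : Omega n m k r' M | ω.2.2.2 ∈ Gcᶜ}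
          = {ω : Omega n m k r' M | ω.2 ∈
              {σ : Copy n m k r' × (Copy n m k r' × Copy n m k r') | σ.2 ∈
                {τ : Copy n m k r' × Copy n m k r' | τ.2 ∈ Gcᶜ}}} := rfl
      rw [hΩ, h1, prodP_marg_snd, prodP_marg_snd, prodP_marg_snd, hGcom]
    have hDT0 : cpP.toOuterMeasure
        {cp : Copy n m k r' | cp.1 ∈ {T : TreeX n k | ¬ (T.run x = true)}} = 0 := by
      rw [hcpP, prodP_marg_fst]
      have h2 := hperfDT x
      rw [hfx] at h2
      have hsetf : {T : TreeX n k | ¬ (T.run x = true)}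
          = {T : TreeX n k | T.run x = true}ᶜ := by
        rw [Set.compl_setOf]
      rw [hsetf, toOuterMeasure_compl]
      have h3 : DT.toOuterMeasure {T : TreeX n k | T.run x = true} = 1 := h2
      rw [h3]
      simp
    have hom2 : Ω.toOuterMeasure {ω : Omega n m k r' M | ω.2 ∈ Smajᶜ} = 0 := by
      rw [hΩ, prodP_marg_snd]
      have hsubm : Smajᶜ ⊆
          {σ : Copy n m k r' × (Copy n m k r' × Copy n m k r') |
            σ.1 ∈ {T₀ : Copy n m k r' | T₀.1 ∈ {T : TreeX n k | ¬ (T.run x = true)}}}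
          ∪ ({σ : Copy n m k r' × (Copy n m k r' × Copy n m k r') |
              σ.2 ∈ {τ : Copy n m k r' × Copy n m k r' |
                τ.1 ∈ {T₀ : Copy n m k r' | T₀.1 ∈ {T : TreeX n k | ¬ (T.run x = true)}}}}
            ∪ {σ : Copy n m k r' × (Copy n m k r' × Copy n m k r') |
              σ.2 ∈ {τ : Copy n m k r' × Copy n m k r' |
                τ.2 ∈ {T₀ : Copy n m k r' | T₀.1 ∈ {T : TreeX n k | ¬ (T.run x = true)}}}}) := by
        intro σ hσ
        by_contra hcon
        simp only [Set.mem_union, not_or] at hcon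
        obtain ⟨m1, m2, m3⟩ := hcon
        have g1 : σ.1.1.run x = true := by
          by_contra hg; exact m1 hg
        have g2 : σ.2.1.1.run x = true := by
          by_contra hg; exact m2 hg
        have g3 : σ.2.2.1.run x = true := by
          by_contra hg; exact m3 hg
        refine hσ ?_
        show σ ∈ Smaj
        rw [hSmaj, Set.mem_setOf_eq, g1, g2, g3]
        rfl
      refine le_antisymm ((measure_mono hsubm).trans ?_) zero_le
      refine (measure_union_le _ _).trans ?_
      have hz1 : (cpP.prodP (cpP.prodP cpP)).toOuterMeasure
          {σ : Copy n m k r' × (Copy n m k r' × Copy n m k r') |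
            σ.1 ∈ {T₀ : Copy n m k r' | T₀.1 ∈ {T : TreeX n k | ¬ (T.run x = true)}}} = 0 := by
        rw [prodP_marg_fst]
        exact hDT0
      have hz2 : (cpP.prodP (cpP.prodP cpP)).toOuterMeasure
          {σ : Copy n m k r' × (Copy n m k r' × Copy n m k r') |
            σ.2 ∈ {τ : Copy n m k r' × Copy n m k r' |
              τ.1 ∈ {T₀ : Copy n m k r' | T₀.1 ∈ {T : TreeX n k | ¬ (T.run x = true)}}}} = 0 := by
        rw [prodP_marg_snd, prodP_marg_fst]
        exact hDT0
      have hz3 : (cpP.prodP (cpP.prodP cpP)).toOuterMeasure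
          {σ : Copy n m k r' × (Copy n m k r' × Copy n m k r') |
            σ.2 ∈ {τ : Copy n m k r' × Copy n m k r' |
              τ.2 ∈ {T₀ : Copy n m k r' | T₀.1 ∈ {T : TreeX n k | ¬ (T.run x = true)}}}} = 0 := by
        rw [prodP_marg_snd, prodP_marg_snd]
        exact hDT0
      rw [hz1, zero_add]
      refine (measure_union_le _ _).trans ?_
      rw [hz2, hz3, add_zero]
    refine le_antisymm ((measure_mono hsub).trans ?_) zero_le
    refine (measure_union_le _ _).trans ?_
    rw [hom1, zero_add]
    refine (measure_union_le _ _).trans ?_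
    rw [hom2, zero_add]
    refine (measure_union_le _ _).trans ?_
    rw [hom5]
    refine le_trans (add_le_add_left (measure_union_le _ _) _) ?_
    rw [hom3, hom4]
    simp
end

section
/- Let D be a finite domain and let P be a nonempty property of Boolean functions f : D → {0,1}. For every k ≥ 1, q ≥ 1 and ε ∈ (0,1], if P has a (k,q)-round-adaptive ε-tester, then P has a (k−1, q·(1 + 2^{⌊q/k⌋}))-round-adaptive ε-tester; moreover, if the given tester is one-sided, so is the resulting tester. -/
open scoped ENNReal BigOperators

open Adaptivity

namespace RoundRed

variable {D : Type} [DecidableEq D] {k' : ℕ}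

/-- Round-`ℓ` query function of `T`, as a function of a plain natural index. -/
def oldQ (T : DetAlg D Bool Bool (k' + 1)) (ℓ : ℕ) (v : D → Option Bool) : Finset D :=
  if h : ℓ < k' + 2 then T.query ⟨ℓ, h⟩ v else ∅

/-- Restriction of a partial view to a set. -/
def restr (v : D → Option Bool) (S : Finset D) : D → Option Bool :=
  fun x => if x ∈ S then v x else none

/-- Replay of the seen-sets of `T` from a partial view. -/
def simSeen (T : DetAlg D Bool Bool (k' + 1)) : ℕ → (D → Option Bool) → Finset D
  | 0, _ => ∅
  | ℓ + 1, v => simSeen T ℓ v ∪ oldQ T ℓ (restr v (simSeen T ℓ v))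

/-- Replay of the round-`ℓ` query set of `T` from a partial view. -/
def simQ (T : DetAlg D Bool Bool (k' + 1)) (ℓ : ℕ) (v : D → Option Bool) : Finset D :=
  oldQ T ℓ (restr v (simSeen T ℓ v))

/-- The candidate view at round `i + 1`, where the unanswered points of the round-`i`
query set get the guessed answers recorded by `s`. -/
def extV (T : DetAlg D Bool Bool (k' + 1)) (i : ℕ) (v : D → Option Bool) (s : Finset D) :
    D → Option Bool :=
  fun x => if x ∈ simSeen T i v then v x
    else if x ∈ simQ T i v then some (decide (x ∈ s)) else none

/-- The merged query set at round `i`: the round-`i` query set together with all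
possible round-`(i+1)` query sets over all guesses for the round-`i` answers. -/
def mergeSet (T : DetAlg D Bool Bool (k' + 1)) (i : ℕ) (v : D → Option Bool) : Finset D :=
  simQ T i v ∪ (simQ T i v).powerset.biUnion fun s => oldQ T (i + 1) (extV T i v s)

/-- Query function of the round-reduced algorithm. -/
def newQuery (T : DetAlg D Bool Bool (k' + 1)) (m i : ℕ) (v : D → Option Bool) : Finset D :=
  if ∃ ℓ ∈ Finset.range i, (simQ T ℓ v).card ≤ m then simQ T (i + 1) v
  else if (simQ T i v).card ≤ m then mergeSet T i v
  else simQ T i v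

/-- The round-reduced algorithm. -/
def Phi (T : DetAlg D Bool Bool (k' + 1)) (m : ℕ) : DetAlg D Bool Bool k' where
  query := fun i v => newQuery T m i.1 v
  out := fun v => T.out (restr v (simSeen T (k' + 2) v))

lemma view_eq_of_agree {f g : D → Bool} {S : Finset D} (h : ∀ x ∈ S, f x = g x) :
    view f S = view g S := by
  funext x; unfold view; split_ifs with hx
  · rw [h x hx]
  · rfl

lemma restr_view {f : D → Bool} {S S' : Finset D} (h : S ⊆ S') :
    restr (view f S') S = view f S := by
  funext x; unfold restr view
  by_cases hx : x ∈ S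
  · simp [hx, h hx]
  · simp [hx]

lemma seen_succ (T : DetAlg D Bool Bool (k' + 1)) (f : D → Bool) (ℓ : ℕ) :
    T.seen f (ℓ + 1) = T.seen f ℓ ∪ oldQ T ℓ (view f (T.seen f ℓ)) := rfl

lemma seen_mono (T : DetAlg D Bool Bool (k' + 1)) (f : D → Bool) :
    Monotone (T.seen f) := by
  apply monotone_nat_of_le_succ
  intro ℓ
  rw [seen_succ]
  exact Finset.subset_union_left

lemma simSeen_correct (T : DetAlg D Bool Bool (k' + 1)) (f : D → Bool) (S' : Finset D) :
    ∀ ℓ, T.seen f ℓ ⊆ S' → simSeen T ℓ (view f S') = T.seen f ℓ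
  | 0, _ => rfl
  | ℓ + 1, h => by
    have hℓ : T.seen f ℓ ⊆ S' := (seen_mono T f (Nat.le_succ ℓ)).trans h
    rw [simSeen, simSeen_correct T f S' ℓ hℓ, restr_view hℓ, seen_succ]

lemma simQ_correct (T : DetAlg D Bool Bool (k' + 1)) (f : D → Bool) {S' : Finset D}
    {ℓ : ℕ} (h : T.seen f ℓ ⊆ S') :
    simQ T ℓ (view f S') = oldQ T ℓ (view f (T.seen f ℓ)) := by
  rw [simQ, simSeen_correct T f S' ℓ h, restr_view h]

/-- The query set at a fixed old round is at most the total number of queries. -/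
lemma oldQ_card_le (T : DetAlg D Bool Bool (k' + 1)) (g : D → Bool) {ℓ : ℕ}
    (h : ℓ < k' + 2) :
    (oldQ T ℓ (view g (T.seen g ℓ))).card ≤ T.totalQueries g := by
  rw [DetAlg.totalQueries]
  have := Finset.single_le_sum (f := fun j : Fin (k' + 2) => (T.queries g j).card)
    (fun _ _ => Nat.zero_le _) (Finset.mem_univ ⟨ℓ, h⟩)
  simpa [oldQ, h, DetAlg.queries] using this

end RoundRed

namespace RoundRed
variable {D : Type} [DecidableEq D] {k' : ℕ}

/-- The surgically modified oracle: agrees with `f` except on the unanswered part of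
the round-`i` query set, where its values are given by (membership in) `s`. -/
def surg (T : DetAlg D Bool Bool (k' + 1)) (f : D → Bool) (i : ℕ) (s : Finset D) :
    D → Bool :=
  fun x => if x ∈ T.seen f i then f x
    else if x ∈ oldQ T i (view f (T.seen f i)) then decide (x ∈ s) else f x

lemma surg_agree (T : DetAlg D Bool Bool (k' + 1)) (f : D → Bool) (i : ℕ) (s : Finset D) :
    ∀ x ∈ T.seen f i, surg T f i s x = f x := by
  intro x hx; simp [surg, hx]

lemma surg_seen (T : DetAlg D Bool Bool (k' + 1)) (f : D → Bool) (i : ℕ) (s : Finset D) :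
    ∀ ℓ, ℓ ≤ i + 1 → T.seen (surg T f i s) ℓ = T.seen f ℓ := by
  intro ℓ
  induction ℓ with
  | zero => intro _; rfl
  | succ ℓ ih =>
    intro hℓ
    have hℓi : ℓ ≤ i := by omega
    have h1 : T.seen (surg T f i s) ℓ = T.seen f ℓ := ih (by omega)
    have h2 : view (surg T f i s) (T.seen f ℓ) = view f (T.seen f ℓ) :=
      view_eq_of_agree fun x hx =>
        surg_agree T f i s x (seen_mono T f hℓi hx)
    rw [seen_succ, seen_succ, h1, h2]

lemma surg_view (T : DetAlg D Bool Bool (k' + 1)) (f : D → Bool) (i : ℕ) (s : Finset D) :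
    view (surg T f i s) (T.seen (surg T f i s) (i + 1))
      = extV T i (view f (T.seen f i)) s := by
  have hs : simSeen T i (view f (T.seen f i)) = T.seen f i :=
    simSeen_correct T f _ i (subset_refl _)
  have hq : simQ T i (view f (T.seen f i)) = oldQ T i (view f (T.seen f i)) :=
    simQ_correct T f (subset_refl _)
  rw [surg_seen T f i s (i + 1) le_rfl]
  funext x
  rw [seen_succ]
  simp only [extV, hs, hq]
  by_cases h1 : x ∈ T.seen f i
  · simp [view, h1, surg_agree T f i s x h1]
  · by_cases h2 : x ∈ oldQ T i (view f (T.seen f i))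
    · simp [view, surg, h1, h2]
    · simp [view, h1, h2]

lemma mergeSet_covers (T : DetAlg D Bool Bool (k' + 1)) (f : D → Bool) (i : ℕ) :
    oldQ T (i + 1) (view f (T.seen f (i + 1))) ⊆ mergeSet T i (view f (T.seen f i)) := by
  set s : Finset D := (oldQ T i (view f (T.seen f i))).filter (fun x => f x = true) with hs
  have hsurg : surg T f i s = f := by
    funext x
    unfold surg
    by_cases h1 : x ∈ T.seen f i
    · simp [h1]
    · by_cases h2 : x ∈ oldQ T i (view f (T.seen f i))
      · simp [h1, h2, hs, Finset.mem_filter]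
      · simp [h1, h2]
  have hext : extV T i (view f (T.seen f i)) s = view f (T.seen f (i + 1)) := by
    rw [← surg_view T f i s, surg_seen T f i s (i + 1) le_rfl, hsurg]
  have hmem : s ∈ (simQ T i (view f (T.seen f i))).powerset := by
    rw [Finset.mem_powerset, hs, simQ_correct T f (subset_refl _)]
    exact Finset.filter_subset _ _
  have hsub : oldQ T (i + 1) (view f (T.seen f (i + 1)))
      ⊆ (simQ T i (view f (T.seen f i))).powerset.biUnion
          (fun t => oldQ T (i + 1) (extV T i (view f (T.seen f i)) t)) := by
    rw [← hext]
    exact Finset.subset_biUnion_of_mem (fun t => oldQ T (i + 1) (extV T i (view f (T.seen f i)) t)) hmem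
  exact hsub.trans Finset.subset_union_right

lemma mergeSet_card (T : DetAlg D Bool Bool (k' + 1)) (f : D → Bool) {i q : ℕ}
    (hb : ∀ g, T.totalQueries g ≤ q) (hi : i + 1 < k' + 2) :
    (mergeSet T i (view f (T.seen f i))).card
      ≤ (oldQ T i (view f (T.seen f i))).card
        + 2 ^ (oldQ T i (view f (T.seen f i))).card * q := by
  have hq : simQ T i (view f (T.seen f i)) = oldQ T i (view f (T.seen f i)) :=
    simQ_correct T f (subset_refl _)
  refine (Finset.card_union_le _ _).trans ?_
  rw [hq]
  refine Nat.add_le_add_left ((Finset.card_biUnion_le).trans ?_) _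
  have hone : ∀ s ∈ (oldQ T i (view f (T.seen f i))).powerset,
      (oldQ T (i + 1) (extV T i (view f (T.seen f i)) s)).card ≤ q := by
    intro s _
    rw [← surg_view T f i s]
    exact (oldQ_card_le T (surg T f i s) hi).trans (hb _)
  refine (Finset.sum_le_sum hone).trans ?_
  rw [Finset.sum_const, Finset.card_powerset, smul_eq_mul]

end RoundRed

namespace RoundRed
variable {D : Type} [DecidableEq D] {k' : ℕ}

lemma totalQueries_eq (T : DetAlg D Bool Bool (k' + 1)) (f : D → Bool) :
    T.totalQueries f
      = ∑ ℓ ∈ Finset.range (k' + 2), (oldQ T ℓ (view f (T.seen f ℓ))).card := by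
  rw [DetAlg.totalQueries, ← Fin.sum_univ_eq_sum_range
    (fun ℓ => (oldQ T ℓ (view f (T.seen f ℓ))).card) (k' + 2)]
  apply Finset.sum_congr rfl
  intro j _
  simp [DetAlg.queries, oldQ, j.2]

lemma pivot_exists {q : ℕ} (T : DetAlg D Bool Bool (k' + 1)) (f : D → Bool)
    (hb : ∀ g, T.totalQueries g ≤ q) :
    ∃ ℓ, ℓ ≤ k' ∧ (oldQ T ℓ (view f (T.seen f ℓ))).card ≤ q / (k' + 1) := by
  by_contra hcon
  push_neg at hcon
  set m := q / (k' + 1) with hm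
  have hlow : ∀ ℓ ∈ Finset.range (k' + 1), m + 1 ≤ (oldQ T ℓ (view f (T.seen f ℓ))).card := by
    intro ℓ hℓ
    exact hcon ℓ (by simpa using Nat.lt_succ_iff.mp (Finset.mem_range.mp hℓ))
  have h1 : (k' + 1) * (m + 1) ≤ ∑ ℓ ∈ Finset.range (k' + 1),
      (oldQ T ℓ (view f (T.seen f ℓ))).card := by
    calc (k' + 1) * (m + 1) = ∑ _ℓ ∈ Finset.range (k' + 1), (m + 1) := by
          rw [Finset.sum_const, Finset.card_range, smul_eq_mul]
      _ ≤ _ := Finset.sum_le_sum hlow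
  have h2 : ∑ ℓ ∈ Finset.range (k' + 1), (oldQ T ℓ (view f (T.seen f ℓ))).card
      ≤ T.totalQueries f := by
    rw [totalQueries_eq]
    exact Finset.sum_le_sum_of_subset (Finset.range_subset_range.mpr (by omega))
  have h3 : T.totalQueries f ≤ q := hb f
  have h4 := Nat.div_add_mod q (k' + 1)
  rw [← hm] at h4
  have h5 : q % (k' + 1) < k' + 1 := Nat.mod_lt _ (by omega)
  have h6 : (k' + 1) * (m + 1) = (k' + 1) * m + (k' + 1) := by ring
  omega

/-- Main per-oracle lemma: the round-reduced algorithm has the same output and makes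
at most `q + 2 ^ m * q` queries. -/
lemma phi_main {q : ℕ} (T : DetAlg D Bool Bool (k' + 1)) (f : D → Bool)
    (hb : ∀ g, T.totalQueries g ≤ q)
    (m : ℕ) (hpx : ∃ ℓ, ℓ ≤ k' ∧ (oldQ T ℓ (view f (T.seen f ℓ))).card ≤ m) :
    (Phi T m).run f = T.run f ∧ (Phi T m).totalQueries f ≤ q + 2 ^ m * q := by
  classical
  set Qf : ℕ → Finset D := fun ℓ => oldQ T ℓ (view f (T.seen f ℓ)) with hQf
  set p := Nat.find hpx with hp
  have hpk : p ≤ k' := (Nat.find_spec hpx).1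
  have hpm : (Qf p).card ≤ m := (Nat.find_spec hpx).2
  have hmin : ∀ ℓ < p, m < (Qf ℓ).card := by
    intro ℓ hℓ
    have := Nat.find_min hpx hℓ
    push_neg at this
    exact this (by omega)
  set NS : ℕ → Finset D := (Phi T m).seen f with hNS
  -- new seen evolves by `newQuery`
  have NSsucc : ∀ i, i ≤ k' → NS (i + 1) = NS i ∪ newQuery T m i (view f (NS i)) := by
    intro i hi
    show (Phi T m).seen f (i + 1) = _
    rw [DetAlg.seen]
    rw [dif_pos (by omega : i < k' + 1)]
    rfl
  -- value of the new query set at round `i`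
  set QVal : ℕ → Finset D := fun i =>
    if i < p then Qf i
    else if i = p then mergeSet T p (view f (T.seen f p))
    else Qf (i + 1) with hQVal
  have qv : ∀ i, i ≤ k' →
      ((i ≤ p → NS i = T.seen f i) ∧ (p < i → T.seen f (i + 1) ⊆ NS i)) →
      newQuery T m i (view f (NS i)) = QVal i := by
    intro i hi hinv
    have hsub : ∀ ℓ, ℓ ≤ i → T.seen f ℓ ⊆ NS i := by
      intro ℓ hℓ
      rcases le_or_gt i p with hip | hip
      · rw [hinv.1 hip]; exact seen_mono T f hℓ
      · exact (seen_mono T f (by omega : ℓ ≤ i + 1)).trans (hinv.2 hip)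
    have hC : (∃ ℓ ∈ Finset.range i, (simQ T ℓ (view f (NS i))).card ≤ m) ↔ p < i := by
      constructor
      · rintro ⟨ℓ, hℓ, hcard⟩
        rw [Finset.mem_range] at hℓ
        rw [simQ_correct T f (hsub ℓ (by omega))] at hcard
        have : p ≤ ℓ := Nat.find_min' hpx ⟨by omega, hcard⟩
        omega
      · intro hpi
        refine ⟨p, Finset.mem_range.mpr hpi, ?_⟩
        rw [simQ_correct T f (hsub p (by omega))]
        exact hpm
    rcases lt_trichotomy i p with hip | hip | hip
    · rw [newQuery, if_neg (by rw [hC]; omega),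
        simQ_correct T f (hsub i le_rfl), if_neg (Nat.not_le.mpr (hmin i hip))]
      simp only [hQVal, if_pos hip]
      rfl
    · subst hip
      rw [newQuery, if_neg (by rw [hC]; omega),
        simQ_correct T f (hsub p le_rfl), if_pos hpm]
      have hNSp : NS p = T.seen f p := hinv.1 le_rfl
      rw [hNSp]
      simp only [hQVal, if_neg (lt_irrefl p), if_pos rfl]
      rfl
    · rw [newQuery, if_pos (hC.mpr hip)]
      have h1 : T.seen f (i + 1) ⊆ NS i := hinv.2 hip
      rw [simQ_correct T f h1]
      simp only [hQVal, if_neg (by omega : ¬ i < p), if_neg (by omega : ¬ i = p)]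
      rfl
  have inv : ∀ i, i ≤ k' + 1 →
      ((i ≤ p → NS i = T.seen f i) ∧ (p < i → T.seen f (i + 1) ⊆ NS i)) := by
    intro i
    induction i with
    | zero => intro _; exact ⟨fun _ => rfl, fun h => absurd h (by omega)⟩
    | succ i ih =>
      intro hi
      have hik : i ≤ k' := by omega
      have hprev := ih (by omega)
      have hqv := qv i hik hprev
      have hNSi : NS (i + 1) = NS i ∪ QVal i := by rw [NSsucc i hik, hqv]
      constructor
      · intro hip1
        have hip : i < p := by omega
        rw [hNSi, hprev.1 (by omega)]
        simp only [hQVal, if_pos hip]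
        exact (seen_succ T f i).symm
      · intro hip1
        rcases lt_trichotomy i p with hip | hip | hip
        · omega
        · subst hip
          rw [hNSi, hprev.1 le_rfl]
          simp only [hQVal, if_neg (lt_irrefl p), if_pos rfl]
          have e1 : T.seen f (p + 2) = T.seen f p ∪ Qf p ∪ Qf (p + 1) := by
            rw [seen_succ T f (p + 1), seen_succ T f p]
            rfl
          rw [e1]
          have c1 : Qf p ⊆ mergeSet T p (view f (T.seen f p)) := by
            rw [mergeSet, simQ_correct T f (subset_refl _)]
            exact Finset.subset_union_left
          have c2 : Qf (p + 1) ⊆ mergeSet T p (view f (T.seen f p)) :=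
            mergeSet_covers T f p
          intro x hx
          rw [Finset.mem_union] at hx
          rcases hx with hx | hx
          · rw [Finset.mem_union] at hx
            rcases hx with hx | hx
            · exact Finset.mem_union_left _ hx
            · exact Finset.mem_union_right _ (c1 hx)
          · exact Finset.mem_union_right _ (c2 hx)
        · rw [hNSi]
          simp only [hQVal, if_neg (by omega : ¬ i < p), if_neg (by omega : ¬ i = p)]
          rw [seen_succ T f (i + 1)]
          exact Finset.union_subset_union (hprev.2 hip) (subset_refl _)
  constructor
  · -- run equality
    have hfin : T.seen f (k' + 2) ⊆ NS (k' + 1) := (inv (k' + 1) le_rfl).2 (by omega)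
    show (Phi T m).out (view f ((Phi T m).seen f (k' + 1))) = T.out (view f (T.seen f (k' + 2)))
    show T.out (restr (view f (NS (k' + 1)))
      (simSeen T (k' + 2) (view f (NS (k' + 1))))) = _
    rw [simSeen_correct T f _ (k' + 2) hfin, restr_view hfin]
  · -- query bound
    have htot : (Phi T m).totalQueries f
        = ∑ i ∈ Finset.range (k' + 1), (newQuery T m i (view f (NS i))).card := by
      rw [DetAlg.totalQueries, ← Fin.sum_univ_eq_sum_range
        (fun i => (newQuery T m i (view f (NS i))).card) (k' + 1)]
      rfl
    rw [htot]
    have hQvals : ∀ i ∈ Finset.range (k' + 1),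
        (newQuery T m i (view f (NS i))).card = (QVal i).card := by
      intro i hi
      rw [Finset.mem_range] at hi
      rw [qv i (by omega) (inv i (by omega))]
    rw [Finset.sum_congr rfl hQvals]
    -- bound each term
    set σ : ℕ → ℕ := fun i => if i ≤ p then i else i + 1 with hσ
    have hterm : ∀ i ∈ Finset.range (k' + 1),
        (QVal i).card ≤ (Qf (σ i)).card + (if i = p then 2 ^ m * q else 0) := by
      intro i hi
      rw [Finset.mem_range] at hi
      rcases lt_trichotomy i p with hip | hip | hip
      · simp only [hQVal, hσ, if_pos hip, if_pos (le_of_lt hip),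
          if_neg (by omega : ¬ i = p), Nat.add_zero, le_refl]
      · subst hip
        simp only [hQVal, hσ, if_neg (lt_irrefl p), if_pos rfl, if_pos le_rfl]
        refine (mergeSet_card T f hb (by omega)).trans ?_
        have : (2 : ℕ) ^ (Qf p).card ≤ 2 ^ m := Nat.pow_le_pow_right (by omega) hpm
        exact Nat.add_le_add_left (Nat.mul_le_mul_right q this) _
      · simp only [hQVal, hσ, if_neg (by omega : ¬ i < p), if_neg (by omega : ¬ i = p),
          if_neg (by omega : ¬ i ≤ p), Nat.add_zero, le_refl]
    refine (Finset.sum_le_sum hterm).trans ?_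
    rw [Finset.sum_add_distrib]
    have hind : ∑ i ∈ Finset.range (k' + 1), (if i = p then 2 ^ m * q else 0) = 2 ^ m * q := by
      rw [Finset.sum_ite_eq' (Finset.range (k' + 1)) p (fun _ => 2 ^ m * q),
        if_pos (Finset.mem_range.mpr (by omega : p < k' + 1))]
    rw [hind]
    have hmain : ∑ i ∈ Finset.range (k' + 1), (Qf (σ i)).card ≤ q := by
      have hinj : ∀ x ∈ Finset.range (k' + 1), ∀ y ∈ Finset.range (k' + 1),
          σ x = σ y → x = y := by
        intro x _ y _ hxy
        simp only [hσ] at hxy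
        split_ifs at hxy <;> omega
      calc ∑ i ∈ Finset.range (k' + 1), (Qf (σ i)).card
          = ∑ ℓ ∈ (Finset.range (k' + 1)).image σ, (Qf ℓ).card :=
            (Finset.sum_image (f := fun ℓ => (Qf ℓ).card) hinj).symm
        _ ≤ ∑ ℓ ∈ Finset.range (k' + 2), (Qf ℓ).card := by
            apply Finset.sum_le_sum_of_subset
            intro ℓ hℓ
            rw [Finset.mem_image] at hℓ
            obtain ⟨i, hi, rfl⟩ := hℓ
            rw [Finset.mem_range] at hi ⊢
            simp only [hσ]
            split_ifs <;> omega
        _ = T.totalQueries f := (totalQueries_eq T f).symm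
        _ ≤ q := hb f
    omega

end RoundRed

namespace RoundRed
variable {D : Type} [DecidableEq D] {k' : ℕ}

lemma probOut_map (A : PMF (DetAlg D Bool Bool (k' + 1))) (m : ℕ) (f : D → Bool)
    (pred : Bool → Prop) (hrun : ∀ T ∈ A.support, (Phi T m).run f = T.run f) :
    probOut (A.map (fun T => Phi T m)) f pred = probOut A f pred := by
  classical
  unfold probOut
  rw [PMF.toOuterMeasure_map_apply, PMF.toOuterMeasure_apply, PMF.toOuterMeasure_apply]
  apply tsum_congr
  intro T
  by_cases hT : T ∈ A.support
  · have hr := hrun T hT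
    rw [Set.indicator_apply, Set.indicator_apply]
    simp only [Set.mem_preimage, Set.mem_setOf_eq, hr]
  · rw [PMF.mem_support_iff, not_not] at hT
    rw [Set.indicator_apply, Set.indicator_apply, hT]
    split_ifs <;> rfl

end RoundRed


open RoundRed

open Adaptivity in
/-- round reduction. For `k ≥ 1` and `q ≥ 1`, any
`(k,q)`-round-adaptive `ε`-tester for a nonempty property of Boolean functions can be
simulated by a `(k−1, q·(1 + 2^{⌊q/k⌋}))`-round-adaptive `ε`-tester; one-sidedness is
preserved. -/
theorem round_reduction {D : Type} [Fintype D] [DecidableEq D]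
    (P : Set (D → Bool)) (hP : P.Nonempty) (k q : ℕ) (hk : 1 ≤ k) (hq : 1 ≤ q)
    (ε : ℝ) (hε0 : 0 < ε) (hε1 : ε ≤ 1)
    (A : PMF (DetAlg D Bool Bool k)) (hA : IsTester (q : ℝ) ε P A) :
    ∃ A' : PMF (DetAlg D Bool Bool (k - 1)),
      IsTester ((q * (1 + 2 ^ (q / k)) : ℕ) : ℝ) ε P A' ∧
        (OneSidedTester P A → OneSidedTester P A') := by
  obtain ⟨k', rfl⟩ : ∃ k', k = k' + 1 := ⟨k - 1, by omega⟩
  set m := q / (k' + 1) with hm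
  have hbound : ∀ T ∈ A.support, ∀ g : D → Bool, T.totalQueries g ≤ q := by
    intro T hT g
    exact_mod_cast hA.1 T hT g
  have hrun : ∀ T ∈ A.support, ∀ g : D → Bool, (Phi T m).run g = T.run g :=
    fun T hT g => (phi_main T g (hbound T hT) m (pivot_exists T g (hbound T hT))).1
  have hprob : ∀ (g : D → Bool) (pred : Bool → Prop),
      probOut (A.map (fun T => Phi T m)) g pred = probOut A g pred :=
    fun g pred => probOut_map A m g pred (fun T hT => hrun T hT g)
  refine ⟨A.map (fun T => Phi T m), ⟨?_, ?_, ?_⟩, ?_⟩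
  · -- query bound
    intro T' hT' g
    rw [PMF.support_map] at hT'
    obtain ⟨T, hT, rfl⟩ := hT'
    have h1 : (Phi T m).totalQueries g ≤ q + 2 ^ m * q :=
      (phi_main T g (hbound T hT) m (pivot_exists T g (hbound T hT))).2
    have h2 : q + 2 ^ m * q = q * (1 + 2 ^ (q / (k' + 1))) := by rw [← hm]; ring
    exact_mod_cast h2 ▸ h1
  · intro f hf
    exact le_of_le_of_eq (hA.2.1 f hf) (hprob f (· = true)).symm
  · intro f hf
    exact le_of_le_of_eq (hA.2.2 f hf) (hprob f (· = false)).symm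
  · intro hOS f hf
    exact (hprob f (· = true)).trans (hOS f hf)
end
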